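/- arXiv:1412.7349 — 5 statements merged into one kernel-verified Lean document; each statement's English description precedes it below -/
import Mathlib

section
/- Let R_n = Γ(n/2 + 1)^{1/n} / √π. Then (R_n / R_{n-1})^{n-1} → √e as n → ∞. -/
open Real Filter Topology

lemma d_lb {x : ℝ} (hx : 0 < x) :
    1 / 2 * Real.log x ≤ Real.log (Real.Gamma (x + 1)) - Real.log (Real.Gamma (x + 1 / 2)) := by
  have h1 : (0:ℝ) < x + 1 := by linarith
  have h := Real.convexOn_log_Gamma.2 (Set.mem_Ioi.mpr hx) (Set.mem_Ioi.mpr h1)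
    (by norm_num : (0:ℝ) ≤ 1/2) (by norm_num : (0:ℝ) ≤ 1/2) (by norm_num)
  simp only [Function.comp, smul_eq_mul] at h
  have hmid : (1/2 : ℝ) * x + (1/2 : ℝ) * (x + 1) = x + 1/2 := by ring
  rw [hmid] at h
  have hadd : Real.log (Real.Gamma (x + 1)) = Real.log x + Real.log (Real.Gamma x) := by
    rw [Real.Gamma_add_one hx.ne', Real.log_mul hx.ne' (Real.Gamma_pos_of_pos hx).ne']
  linarith

lemma d_ub {x : ℝ} (hx : 0 < x) :
    Real.log (Real.Gamma (x + 1)) - Real.log (Real.Gamma (x + 1 / 2)) ≤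
      1 / 2 * Real.log (x + 1 / 2) := by
  have h05 : (0:ℝ) < x + 1/2 := by linarith
  have h15 : (0:ℝ) < x + 3/2 := by linarith
  have h := Real.convexOn_log_Gamma.2 (Set.mem_Ioi.mpr h05) (Set.mem_Ioi.mpr h15)
    (by norm_num : (0:ℝ) ≤ 1/2) (by norm_num : (0:ℝ) ≤ 1/2) (by norm_num)
  simp only [Function.comp, smul_eq_mul] at h
  have hmid : (1/2 : ℝ) * (x + 1/2) + (1/2 : ℝ) * (x + 3/2) = x + 1 := by ring
  rw [hmid] at h
  have hadd : Real.log (Real.Gamma (x + 3/2)) =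
      Real.log (x + 1/2) + Real.log (Real.Gamma (x + 1/2)) := by
    have h32 : x + 3/2 = (x + 1/2) + 1 := by ring
    rw [h32, Real.Gamma_add_one h05.ne', Real.log_mul h05.ne' (Real.Gamma_pos_of_pos h05).ne']
  linarith

lemma dup_log (n : ℕ) :
    Real.log (Real.Gamma ((n : ℝ) / 2 + 1 / 2)) + Real.log (Real.Gamma ((n : ℝ) / 2 + 1)) =
      Real.log (n.factorial) - n * Real.log 2 + 1 / 2 * Real.log π := by
  have h := Real.Gamma_mul_Gamma_add_half ((n : ℝ) / 2 + 1 / 2)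
  have e1 : (n : ℝ) / 2 + 1 / 2 + 1 / 2 = (n : ℝ) / 2 + 1 := by ring
  have e2 : 2 * ((n : ℝ) / 2 + 1 / 2) = (n : ℝ) + 1 := by ring
  have e3 : (1:ℝ) - ((n:ℝ) + 1) = -(n : ℝ) := by ring
  rw [e1, e2, e3, Real.Gamma_nat_eq_factorial] at h
  have hfac : (0:ℝ) < (n.factorial : ℝ) := by positivity
  have h2 : (0:ℝ) < (2:ℝ) ^ (-(n:ℝ)) := Real.rpow_pos_of_pos (by norm_num) _
  have hsπ : (0:ℝ) < Real.sqrt π := Real.sqrt_pos.mpr Real.pi_pos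
  have hga : (0:ℝ) < Real.Gamma ((n : ℝ) / 2 + 1 / 2) := Real.Gamma_pos_of_pos (by positivity)
  have hgb : (0:ℝ) < Real.Gamma ((n : ℝ) / 2 + 1) := Real.Gamma_pos_of_pos (by positivity)
  have := congrArg Real.log h
  rw [Real.log_mul (by positivity) hsπ.ne', Real.log_mul hfac.ne' h2.ne',
    Real.log_mul hga.ne' hgb.ne', Real.log_rpow (by norm_num : (0:ℝ) < 2),
    Real.log_sqrt Real.pi_pos.le] at this
  linarith

lemma stirling_weak :
    Tendsto (fun n : ℕ => Real.log (n.factorial) / n - Real.log n) atTop (𝓝 (-1)) := by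
  have hlogdiv : Tendsto (fun x : ℝ => Real.log x / x) atTop (𝓝 0) := by
    simpa using Real.isLittleO_log_id_atTop.tendsto_div_nhds_zero
  have h1 : Tendsto (fun n : ℕ => Real.log (Stirling.stirlingSeq n) / n) atTop (𝓝 0) := by
    have hπ : Real.sqrt π ≠ 0 := (Real.sqrt_pos.mpr Real.pi_pos).ne'
    have hl : Tendsto (fun n : ℕ => Real.log (Stirling.stirlingSeq n)) atTop
        (𝓝 (Real.log (Real.sqrt π))) :=
      ((Real.continuousAt_log hπ).tendsto).comp Stirling.tendsto_stirlingSeq_sqrt_pi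
    exact hl.div_atTop tendsto_natCast_atTop_atTop
  have h2 : Tendsto (fun n : ℕ => Real.log (2 * n) / (2 * n)) atTop (𝓝 (0:ℝ)) := by
    have : Tendsto (fun n : ℕ => (2 : ℝ) * n) atTop atTop :=
      tendsto_natCast_atTop_atTop.const_mul_atTop (by norm_num)
    exact hlogdiv.comp this
  have h3 : Tendsto (fun n : ℕ =>
      Real.log (Stirling.stirlingSeq n) / n + Real.log (2 * n) / (2 * n) - 1) atTop
      (𝓝 (-1)) := by
    have := (h1.add h2).sub_const 1
    simpa using this
  refine h3.congr' ?_
  filter_upwards [eventually_ge_atTop 1] with n hn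
  have hn0 : (0:ℝ) < (n:ℝ) := by exact_mod_cast hn
  have hf := Stirling.log_stirlingSeq_formula n
  have hlogne : Real.log ((n : ℝ) / Real.exp 1) = Real.log n - 1 := by
    rw [Real.log_div hn0.ne' (Real.exp_ne_zero 1), Real.log_exp]
  rw [hlogne] at hf
  have hfac : Real.log n.factorial = Real.log (Stirling.stirlingSeq n)
      + 1/2 * Real.log (2*n) + n * (Real.log n - 1) := by linarith
  rw [hfac]
  field_simp
  ring

/-- The radius of the `n`-dimensional Euclidean ball of unit volume. -/
noncomputable def unitBallRadius (n : ℕ) : ℝ :=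
  (Real.Gamma ((n : ℝ) / 2 + 1)) ^ ((1 : ℝ) / n) / Real.sqrt π

theorem tendsto_ratio_pow_sqrt_e :
    Tendsto (fun n : ℕ => (unitBallRadius n / unitBallRadius (n - 1)) ^ (n - 1))
      atTop (nhds (Real.sqrt (Real.exp 1))) := by
  have hga : ∀ n : ℕ, 0 < Real.Gamma ((n : ℝ) / 2 + 1) := fun n =>
    Real.Gamma_pos_of_pos (by positivity)
  obtain ⟨g, hgdef⟩ : ∃ g : ℕ → ℝ, g = fun n : ℕ => Real.log (Real.Gamma ((n : ℝ) / 2 + 1)) :=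
    ⟨_, rfl⟩
  obtain ⟨d, hddef⟩ : ∃ d : ℕ → ℝ, d = fun n : ℕ =>
      Real.log (Real.Gamma ((n : ℝ) / 2 + 1)) - Real.log (Real.Gamma ((n : ℝ) / 2 + 1 / 2)) :=
    ⟨_, rfl⟩
  have hdlb : ∀ n : ℕ, 1 ≤ n → 1 / 2 * Real.log ((n : ℝ) / 2) ≤ d n := by
    intro n hn
    have hn1 : (1:ℝ) ≤ (n : ℝ) := by exact_mod_cast hn
    have hx : (0:ℝ) < (n : ℝ) / 2 := by linarith
    simp only [hddef]
    exact d_lb hx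
  have hdub : ∀ n : ℕ, 1 ≤ n → d n ≤ 1 / 2 * Real.log ((n : ℝ) / 2 + 1 / 2) := by
    intro n hn
    have hn1 : (1:ℝ) ≤ (n : ℝ) := by exact_mod_cast hn
    have hx : (0:ℝ) < (n : ℝ) / 2 := by linarith
    simp only [hddef]
    exact d_ub hx
  have hlogdiv : Tendsto (fun n : ℕ => Real.log n / n) atTop (𝓝 0) := by
    have : Tendsto (fun x : ℝ => Real.log x / x) atTop (𝓝 0) := by
      simpa using Real.isLittleO_log_id_atTop.tendsto_div_nhds_zero
    exact this.comp tendsto_natCast_atTop_atTop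
  -- `c1 → 0`
  have T2 : Tendsto (fun n : ℕ => d n - 1 / 2 * Real.log ((n : ℝ) / 2)) atTop (𝓝 0) := by
    have ha : ∀ᶠ n : ℕ in atTop, 0 ≤ d n - 1 / 2 * Real.log ((n : ℝ) / 2) := by
      filter_upwards [eventually_ge_atTop 1] with n hn
      have := hdlb n hn
      linarith
    have hb : ∀ᶠ n : ℕ in atTop,
        d n - 1 / 2 * Real.log ((n : ℝ) / 2) ≤ 1 / (n : ℝ) := by
      filter_upwards [eventually_ge_atTop 1] with n hn
      have hn1 : (1:ℝ) ≤ (n : ℝ) := by exact_mod_cast hn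
      have hx : (0:ℝ) < (n : ℝ) / 2 := by linarith
      have hub := hdub n hn
      have hinv : (0:ℝ) ≤ 1 / (n : ℝ) := by positivity
      have hlog : Real.log ((n : ℝ) / 2 + 1 / 2) - Real.log ((n : ℝ) / 2) ≤ 1 / (n : ℝ) := by
        have hdivpos : (0:ℝ) < ((n : ℝ) / 2 + 1 / 2) / ((n : ℝ) / 2) := by positivity
        have h1 : Real.log (((n : ℝ) / 2 + 1 / 2) / ((n : ℝ) / 2)) ≤
            ((n : ℝ) / 2 + 1 / 2) / ((n : ℝ) / 2) - 1 := Real.log_le_sub_one_of_pos hdivpos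
        rw [Real.log_div (by positivity) hx.ne'] at h1
        have h2 : ((n : ℝ) / 2 + 1 / 2) / ((n : ℝ) / 2) - 1 = 1 / (n : ℝ) := by
          field_simp
          ring
        linarith
      linarith
    exact squeeze_zero' ha hb tendsto_one_div_atTop_nhds_zero_nat
  -- `c2 → 0`
  have T3 : Tendsto (fun n : ℕ => d n / (2 * (n : ℝ))) atTop (𝓝 0) := by
    have ha : ∀ᶠ n : ℕ in atTop, 0 ≤ d n / (2 * (n : ℝ)) := by
      filter_upwards [eventually_ge_atTop 2] with n hn
      have hn2 : (2:ℝ) ≤ (n : ℝ) := by exact_mod_cast hn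
      have hlog0 : 0 ≤ Real.log ((n : ℝ) / 2) := Real.log_nonneg (by linarith)
      have hd0 : 0 ≤ d n := le_trans (by linarith) (hdlb n (by omega))
      positivity
    have hb : ∀ᶠ n : ℕ in atTop, d n / (2 * (n : ℝ)) ≤ Real.log n / n := by
      filter_upwards [eventually_ge_atTop 2] with n hn
      have hn2 : (2:ℝ) ≤ (n : ℝ) := by exact_mod_cast hn
      have hub := hdub n (by omega)
      have hmono : Real.log ((n : ℝ) / 2 + 1 / 2) ≤ Real.log (n : ℝ) :=
        Real.log_le_log (by linarith) (by linarith)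
      have hlog0 : 0 ≤ Real.log (n : ℝ) := Real.log_nonneg (by linarith)
      rw [div_le_div_iff₀ (by linarith) (by linarith)]
      have hd' : d n ≤ 1 / 2 * Real.log (n : ℝ) := by linarith
      nlinarith [mul_le_mul_of_nonneg_right hd' (by linarith : (0:ℝ) ≤ (n : ℝ)),
        mul_nonneg hlog0 (by linarith : (0:ℝ) ≤ (n : ℝ))]
    exact squeeze_zero' ha hb hlogdiv
  -- `log π / (4 n) → 0`
  have T4 : Tendsto (fun n : ℕ => Real.log π / (4 * (n : ℝ))) atTop (𝓝 0) := by
    have h := tendsto_one_div_atTop_nhds_zero_nat.const_mul (Real.log π / 4)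
    rw [mul_zero] at h
    refine h.congr fun n => by ring
  have key : Tendsto (fun n : ℕ => d n - g n / n) atTop (𝓝 (1 / 2)) := by
    have main : Tendsto (fun n : ℕ =>
        -(1 / 2) * (Real.log n.factorial / n - Real.log n) +
          ((d n - 1 / 2 * Real.log ((n : ℝ) / 2)) - d n / (2 * (n : ℝ)) -
            Real.log π / (4 * (n : ℝ)))) atTop (𝓝 (1 / 2)) := by
      have := (stirling_weak.const_mul (-(1/2) : ℝ)).add ((T2.sub T3).sub T4)
      norm_num at this
      convert this using 2
      norm_num
    refine main.congr' ?_
    filter_upwards [eventually_ge_atTop 1] with n hn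
    have hn0 : (0:ℝ) < (n : ℝ) := by exact_mod_cast Nat.pos_of_ne_zero (by omega)
    have hdup := dup_log n
    have hgval : g n = (Real.log n.factorial - n * Real.log 2 + 1 / 2 * Real.log π + d n) / 2 := by
      simp only [hgdef, hddef]
      linarith
    have hlogn2 : Real.log ((n : ℝ) / 2) = Real.log n - Real.log 2 :=
      Real.log_div hn0.ne' two_ne_zero
    rw [hgval, hlogn2]
    field_simp
    ring
  have heq : (fun n : ℕ => (unitBallRadius n / unitBallRadius (n - 1)) ^ (n - 1)) =ᶠ[atTop]
      (fun n : ℕ => Real.exp (d n - g n / n)) := by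
    filter_upwards [eventually_ge_atTop 2] with n hn
    have hn2 : (2:ℝ) ≤ (n : ℝ) := by exact_mod_cast hn
    have hmcast : ((n - 1 : ℕ) : ℝ) = (n : ℝ) - 1 := by
      push_cast [Nat.cast_sub (by omega : 1 ≤ n)]
      ring
    have hM : (0:ℝ) < ((n - 1 : ℕ) : ℝ) := by rw [hmcast]; linarith
    have ha := hga n
    have hb := hga (n - 1)
    have hb' : (0:ℝ) < Real.Gamma ((n : ℝ) / 2 + 1 / 2) := Real.Gamma_pos_of_pos (by positivity)
    have hsπ : (0:ℝ) < Real.sqrt π := Real.sqrt_pos.mpr Real.pi_pos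
    show (unitBallRadius n / unitBallRadius (n - 1)) ^ (n - 1) = Real.exp (d n - g n / n)
    have hratio : unitBallRadius n / unitBallRadius (n - 1) =
        Real.Gamma ((n : ℝ) / 2 + 1) ^ ((1:ℝ) / n) /
          Real.Gamma (((n - 1 : ℕ) : ℝ) / 2 + 1) ^ ((1:ℝ) / ((n - 1 : ℕ) : ℝ)) := by
      unfold unitBallRadius
      rw [div_div_div_comm, div_self hsπ.ne', div_one]
    rw [hratio, div_pow,
      ← Real.rpow_natCast (Real.Gamma ((n : ℝ) / 2 + 1) ^ ((1:ℝ) / n)) (n - 1),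
      ← Real.rpow_natCast
        (Real.Gamma (((n - 1 : ℕ) : ℝ) / 2 + 1) ^ ((1:ℝ) / ((n - 1 : ℕ) : ℝ))) (n - 1),
      ← Real.rpow_mul ha.le, ← Real.rpow_mul hb.le]
    have e1 : (1:ℝ) / ((n - 1 : ℕ) : ℝ) * ((n - 1 : ℕ) : ℝ) = 1 :=
      one_div_mul_cancel hM.ne'
    have e2 : (1:ℝ) / (n : ℝ) * ((n - 1 : ℕ) : ℝ) = ((n : ℝ) - 1) / (n : ℝ) := by
      rw [hmcast]; ring
    have harg : ((n - 1 : ℕ) : ℝ) / 2 + 1 = (n : ℝ) / 2 + 1 / 2 := by rw [hmcast]; ring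
    rw [e1, e2, Real.rpow_one, harg]
    simp only [hddef, hgdef]
    rw [show Real.log (Real.Gamma ((n : ℝ) / 2 + 1)) -
          Real.log (Real.Gamma ((n : ℝ) / 2 + 1 / 2)) -
          Real.log (Real.Gamma ((n : ℝ) / 2 + 1)) / (n : ℝ) =
        Real.log (Real.Gamma ((n : ℝ) / 2 + 1)) * (((n : ℝ) - 1) / (n : ℝ)) -
          Real.log (Real.Gamma ((n : ℝ) / 2 + 1 / 2)) by field_simp; ring]
    rw [Real.exp_sub, Real.exp_log hb', Real.rpow_def_of_pos ha]
  rw [show Real.sqrt (Real.exp 1) = Real.exp (1 / 2) by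
    rw [Real.sqrt_eq_rpow, Real.exp_one_rpow]]
  exact ((Real.continuous_exp.tendsto _).comp key).congr' heq.symm
end

section
/- Let R_n = Γ(n/2 + 1)^{1/n} / √π. Then (n - 1) / (2 R_n²) → π e as n → ∞. -/
open Real Filter

private lemma aux_g :
    Tendsto (fun m : ℕ => 1 / (m : ℝ) * Real.log (m.factorial) - Real.log m)
      atTop (nhds (-1)) := by
  have T1 : Tendsto (fun m : ℕ => 1 / (m : ℝ) * Real.log (Stirling.stirlingSeq m))
      atTop (nhds 0) := by
    have hlog : Tendsto (fun m : ℕ => Real.log (Stirling.stirlingSeq m)) atTop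
        (nhds (Real.log (Real.sqrt π))) :=
      Stirling.tendsto_stirlingSeq_sqrt_pi.log (Real.sqrt_pos.mpr pi_pos).ne'
    have := tendsto_one_div_atTop_nhds_zero_nat.mul hlog
    simpa using this
  have T2 : Tendsto (fun m : ℕ => 1 / (2 * (m : ℝ)) * Real.log (2 * m)) atTop (nhds 0) := by
    have h2 : Tendsto (fun m : ℕ => 2 * (m : ℝ)) atTop atTop :=
      (tendsto_natCast_atTop_atTop).const_mul_atTop two_pos
    have := (Real.isLittleO_log_id_atTop.tendsto_div_nhds_zero).comp h2
    refine this.congr fun m => ?_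
    simp only [Function.comp_apply, id]
    ring
  have T : Tendsto (fun m : ℕ => 1 / (m : ℝ) * Real.log (Stirling.stirlingSeq m)
      + 1 / (2 * (m : ℝ)) * Real.log (2 * m) + (-1 : ℝ)) atTop (nhds (-1)) := by
    have := (T1.add T2).add (tendsto_const_nhds (x := (-1 : ℝ)))
    simpa using this
  refine T.congr' ?_
  filter_upwards [eventually_ge_atTop 1] with m hm
  have hm0 : (0 : ℝ) < m := by exact_mod_cast hm
  have hfact : Real.log (m.factorial)
      = Real.log (Stirling.stirlingSeq m) + 1 / 2 * Real.log (2 * m)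
        + m * Real.log (m / Real.exp 1) := by
    have := Stirling.log_stirlingSeq_formula m
    linarith
  rw [hfact, Real.log_div hm0.ne' (Real.exp_ne_zero 1), Real.log_exp]
  field_simp
  ring

private lemma aux_fact (f : ℕ → ℕ) (hf : Tendsto f atTop atTop)
    (hlo : ∀ᶠ n : ℕ in atTop, (n : ℝ) - 2 ≤ 2 * (f n : ℝ))
    (hhi : ∀ᶠ n : ℕ in atTop, 2 * (f n : ℝ) ≤ (n : ℝ) + 2) :
    Tendsto (fun n : ℕ => 2 / (n : ℝ) * Real.log ((f n).factorial) - Real.log n)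
      atTop (nhds (-(1 + Real.log 2))) := by
  have h1 : Tendsto (fun n : ℕ => 2 * (f n : ℝ) / n) atTop (nhds 1) := by
    rw [← tendsto_sub_nhds_zero_iff]
    apply squeeze_zero_norm' (a := fun n : ℕ => 2 / (n : ℝ))
    · filter_upwards [hlo, hhi, eventually_ge_atTop 1] with n hl hh hn1
      have hn0 : (0 : ℝ) < n := by exact_mod_cast hn1
      have heq : 2 * (f n : ℝ) / n - 1 = (2 * (f n : ℝ) - n) / n := by field_simp
      rw [Real.norm_eq_abs, heq, abs_div, abs_of_pos hn0]
      gcongr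
      rw [abs_le]
      constructor <;> linarith
    · have := tendsto_one_div_atTop_nhds_zero_nat.const_mul (2 : ℝ)
      simpa [div_eq_mul_inv] using this
  have hg' : Tendsto (fun n : ℕ => 1 / (f n : ℝ) * Real.log ((f n).factorial)
      - Real.log (f n)) atTop (nhds (-1)) := aux_g.comp hf
  have h2 : Tendsto (fun n : ℕ => (2 * (f n : ℝ) / n - 1) * Real.log (f n)) atTop (nhds 0) := by
    apply squeeze_zero_norm' (a := fun n : ℕ => 2 * (Real.log n / n))
    · filter_upwards [hlo, hhi, eventually_ge_atTop 2, hf.eventually (eventually_ge_atTop 1)]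
        with n hl hh hn2 hfn1
      have hn0 : (0 : ℝ) < n := by positivity
      have hn2' : (2 : ℝ) ≤ n := by exact_mod_cast hn2
      have hf1 : (1 : ℝ) ≤ (f n : ℝ) := by exact_mod_cast hfn1
      have hfle : (f n : ℝ) ≤ n := by linarith
      have hlogf0 : 0 ≤ Real.log (f n) := Real.log_nonneg hf1
      have hlogle : Real.log (f n) ≤ Real.log n := Real.log_le_log (by linarith) hfle
      rw [Real.norm_eq_abs, abs_mul, abs_of_nonneg hlogf0]
      have habs : |2 * (f n : ℝ) / n - 1| ≤ 2 / n := by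
        have heq : 2 * (f n : ℝ) / n - 1 = (2 * (f n : ℝ) - n) / n := by field_simp
        rw [heq, abs_div, abs_of_pos hn0]
        gcongr
        rw [abs_le]
        constructor <;> linarith
      calc |2 * (f n : ℝ) / n - 1| * Real.log (f n)
          ≤ (2 / n) * Real.log n := by
            apply mul_le_mul habs hlogle hlogf0 (by positivity)
        _ = 2 * (Real.log n / n) := by ring
    · have hbase : Tendsto (fun n : ℕ => Real.log n / n) atTop (nhds 0) :=
        (Real.isLittleO_log_id_atTop.tendsto_div_nhds_zero).comp tendsto_natCast_atTop_atTop
      simpa using hbase.const_mul (2 : ℝ)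
  have h3 : Tendsto (fun n : ℕ => Real.log ((f n : ℝ) / n)) atTop (nhds (-Real.log 2)) := by
    have hhalf : Tendsto (fun n : ℕ => (f n : ℝ) / n) atTop (nhds (1 / 2)) := by
      have := h1.div_const 2
      refine this.congr fun n => ?_
      ring
    have := hhalf.log (by norm_num)
    simpa [Real.log_div, Real.log_inv, one_div] using this
  have T := ((h1.mul hg').add h2).add h3
  have hval : (1 : ℝ) * (-1) + 0 + -Real.log 2 = -(1 + Real.log 2) := by ring
  rw [hval] at T
  refine T.congr' ?_
  filter_upwards [eventually_ge_atTop 1, hf.eventually (eventually_ge_atTop 1)] with n hn1 hfn1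
  have hn0 : (n : ℝ) ≠ 0 := by positivity
  have hf0 : ((f n : ℝ)) ≠ 0 := by
    have : (1 : ℝ) ≤ (f n : ℝ) := by exact_mod_cast hfn1
    linarith
  rw [Real.log_div hf0 hn0]
  field_simp
  ring

private lemma aux_key :
    Tendsto (fun n : ℕ => 2 / (n : ℝ) * Real.log (Real.Gamma ((n : ℝ) / 2 + 1)) - Real.log n)
      atTop (nhds (-(1 + Real.log 2))) := by
  have hdiv : Tendsto (fun n : ℕ => n / 2) atTop atTop :=
    tendsto_atTop_atTop.2 fun b => ⟨2 * b, fun n hn => by omega⟩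
  have hlo1 : ∀ n : ℕ, (n : ℝ) - 2 ≤ 2 * ((n / 2 : ℕ) : ℝ) := by
    intro n
    have h : n ≤ 2 * (n / 2) + 1 := by omega
    have : (n : ℝ) ≤ 2 * ((n / 2 : ℕ) : ℝ) + 1 := by exact_mod_cast h
    linarith
  have hhi1 : ∀ n : ℕ, 2 * ((n / 2 : ℕ) : ℝ) ≤ (n : ℝ) + 2 := by
    intro n
    have h : 2 * (n / 2) ≤ n := by omega
    have : 2 * ((n / 2 : ℕ) : ℝ) ≤ (n : ℝ) := by exact_mod_cast h
    linarith
  have hLow := aux_fact (fun n => n / 2) hdiv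
    (Eventually.of_forall hlo1) (Eventually.of_forall hhi1)
  have hdiv' : Tendsto (fun n : ℕ => n / 2 + 1) atTop atTop :=
    tendsto_atTop_atTop.2 fun b => ⟨2 * b, fun n hn => by omega⟩
  have hHigh := aux_fact (fun n => n / 2 + 1) hdiv'
    (Eventually.of_forall (fun n : ℕ => by
      have := hlo1 n
      push_cast
      linarith))
    (Eventually.of_forall (fun n : ℕ => by
      have h : 2 * (n / 2 + 1) ≤ n + 2 := by omega
      exact_mod_cast h))
  refine tendsto_of_tendsto_of_tendsto_of_le_of_le' hLow hHigh ?_ ?_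
  · filter_upwards [eventually_ge_atTop 2] with n hn2
    have hm1 : 1 ≤ n / 2 := by omega
    have hmR : (1 : ℝ) ≤ ((n / 2 : ℕ) : ℝ) := by exact_mod_cast hm1
    have hn0 : (0 : ℝ) < n := by positivity
    have harg : ((n / 2 : ℕ) : ℝ) + 1 ≤ (n : ℝ) / 2 + 1 := by
      have h : 2 * (n / 2) ≤ n := by omega
      have : 2 * ((n / 2 : ℕ) : ℝ) ≤ (n : ℝ) := by exact_mod_cast h
      linarith
    have hn2' : (2 : ℝ) ≤ (n : ℝ) := by exact_mod_cast hn2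
    have hΓ : Real.Gamma (((n / 2 : ℕ) : ℝ) + 1) ≤ Real.Gamma ((n : ℝ) / 2 + 1) :=
      Real.Gamma_strictMonoOn_Ici.monotoneOn (Set.mem_Ici.mpr (by linarith))
        (Set.mem_Ici.mpr (by linarith)) harg
    rw [Real.Gamma_nat_eq_factorial] at hΓ
    have hfactpos : (0 : ℝ) < ((n / 2).factorial : ℝ) := by exact_mod_cast (n / 2).factorial_pos
    have hlog := Real.log_le_log hfactpos hΓ
    have h2n : (0 : ℝ) ≤ 2 / n := by positivity
    nlinarith [mul_le_mul_of_nonneg_left hlog h2n]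
  · filter_upwards [eventually_ge_atTop 2] with n hn2
    have hm1 : 1 ≤ n / 2 := by omega
    have hmR : (1 : ℝ) ≤ ((n / 2 : ℕ) : ℝ) := by exact_mod_cast hm1
    have hn0 : (0 : ℝ) < n := by positivity
    have harg : (n : ℝ) / 2 + 1 ≤ ((n / 2 + 1 : ℕ) : ℝ) + 1 := by
      have h : n ≤ 2 * (n / 2) + 1 := by omega
      have : (n : ℝ) ≤ 2 * ((n / 2 : ℕ) : ℝ) + 1 := by exact_mod_cast h
      push_cast
      linarith
    have hn2' : (2 : ℝ) ≤ (n : ℝ) := by exact_mod_cast hn2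
    have hΓ : Real.Gamma ((n : ℝ) / 2 + 1) ≤ Real.Gamma (((n / 2 + 1 : ℕ) : ℝ) + 1) :=
      Real.Gamma_strictMonoOn_Ici.monotoneOn (Set.mem_Ici.mpr (by linarith))
        (Set.mem_Ici.mpr (by push_cast; linarith)) harg
    rw [Real.Gamma_nat_eq_factorial] at hΓ
    have hΓpos : (0 : ℝ) < Real.Gamma ((n : ℝ) / 2 + 1) :=
      Real.Gamma_pos_of_pos (by positivity)
    have hlog := Real.log_le_log hΓpos hΓ
    have h2n : (0 : ℝ) ≤ 2 / n := by positivity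
    nlinarith [mul_le_mul_of_nonneg_left hlog h2n]

theorem tendsto_n_div_two_R_sq :
    Tendsto (fun n : ℕ => ((n : ℝ) - 1) / (2 * unitBallRadius n ^ 2))
      atTop (nhds (π * Real.exp 1)) := by
  have hA : Tendsto (fun n : ℕ => ((n : ℝ) - 1) / n) atTop (nhds 1) := by
    have := (tendsto_const_nhds (x := (1 : ℝ))).sub tendsto_one_div_atTop_nhds_zero_nat
    rw [sub_zero] at this
    refine this.congr' ?_
    filter_upwards [eventually_ge_atTop 1] with n hn
    have hn0 : (n : ℝ) ≠ 0 := by positivity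
    field_simp
  have hB : Tendsto (fun n : ℕ =>
      Real.exp (-(2 / (n : ℝ) * Real.log (Real.Gamma ((n : ℝ) / 2 + 1)) - Real.log n)))
      atTop (nhds (Real.exp (1 + Real.log 2))) := by
    have := (Real.continuous_exp.tendsto (-(-(1 + Real.log 2)))).comp aux_key.neg
    simpa [Function.comp_def] using this
  have T := ((tendsto_const_nhds (x := (π / 2 : ℝ))).mul hA).mul hB
  have hval : π / 2 * 1 * Real.exp (1 + Real.log 2) = π * Real.exp 1 := by
    rw [Real.exp_add, Real.exp_log two_pos]
    ring
  rw [hval] at T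
  refine T.congr' ?_
  filter_upwards [eventually_ge_atTop 1] with n hn
  have hn0 : (0 : ℝ) < n := by positivity
  have hΓpos : 0 < Real.Gamma ((n : ℝ) / 2 + 1) := Real.Gamma_pos_of_pos (by positivity)
  have hR : unitBallRadius n ^ 2
      = Real.exp (2 / (n : ℝ) * Real.log (Real.Gamma ((n : ℝ) / 2 + 1))) / π := by
    rw [unitBallRadius, div_pow, Real.sq_sqrt pi_pos.le,
      ← Real.rpow_natCast (Real.Gamma ((n : ℝ) / 2 + 1) ^ ((1 : ℝ) / n)) 2,
      ← Real.rpow_mul hΓpos.le, Real.rpow_def_of_pos hΓpos]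
    norm_num
    ring_nf
  rw [hR, neg_sub, Real.exp_sub, Real.exp_log hn0]
  have hexp : Real.exp (2 / (n : ℝ) * Real.log (Real.Gamma ((n : ℝ) / 2 + 1))) ≠ 0 :=
    Real.exp_ne_zero _
  field_simp
end

section
/- Fix 0 < δ < d. The functions F_n(x) = (1 - x²/R_n²)^{(n-1)/2}, defined for n large enough that R_n > d, converge uniformly on [δ, d] to x ↦ exp(-π e x²) as n → ∞. -/
open Real Filter
open scoped Nat Topology

/-- `log m! / m - log m → -1` (weak Stirling). -/
lemma key_fact : Tendsto (fun m : ℕ => Real.log (m !) / m - Real.log m) atTop (𝓝 (-1)) := by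
  have hπ : (0:ℝ) < Real.sqrt π := Real.sqrt_pos.mpr Real.pi_pos
  have hs : Tendsto (fun m : ℕ => Real.log (Stirling.stirlingSeq m)) atTop
      (𝓝 (Real.log (Real.sqrt π))) :=
    ((Real.continuousAt_log hπ.ne').tendsto).comp Stirling.tendsto_stirlingSeq_sqrt_pi
  have h1 : Tendsto (fun m : ℕ => Real.log (Stirling.stirlingSeq m) / m) atTop (𝓝 0) :=
    hs.div_atTop tendsto_natCast_atTop_atTop
  have h2 : Tendsto (fun m : ℕ => Real.log (2 * m) / (2 * (m:ℝ))) atTop (𝓝 0) := by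
    have h := Real.isLittleO_log_id_atTop.tendsto_div_nhds_zero
    exact h.comp (tendsto_natCast_atTop_atTop.const_mul_atTop two_pos)
  have hsum : Tendsto (fun m : ℕ => Real.log (Stirling.stirlingSeq m) / m
      + Real.log (2 * m) / (2 * (m:ℝ)) + (-1)) atTop (𝓝 (-1)) := by
    have h := (h1.add h2).add_const (-1 : ℝ)
    simpa using h
  refine hsum.congr' ?_
  filter_upwards [eventually_ge_atTop 1] with m hm
  have hm0 : (0:ℝ) < m := by exact_mod_cast hm
  have hform := Stirling.log_stirlingSeq_formula m
  have hlm : Real.log ((m:ℝ) / Real.exp 1) = Real.log m - 1 := by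
    rw [Real.log_div hm0.ne' (Real.exp_ne_zero 1), Real.log_exp]
  rw [hlm] at hform
  have hf : Real.log (m !) = Real.log (Stirling.stirlingSeq m)
      + 1 / 2 * Real.log (2 * m) + m * (Real.log m - 1) := by linarith
  rw [hf]
  field_simp
  ring

/-- helper: asymptotics of `2 log (j n)! / n - log n` when `j n` is about `n/2`. -/
lemma fact_half_lim (j : ℕ → ℕ) (hj : Tendsto j atTop atTop)
    (hb : ∀ n : ℕ, |2 * ((j n : ℝ)) - n| ≤ 2) :
    Tendsto (fun n : ℕ => 2 * Real.log ((j n)!) / n - Real.log n) atTop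
      (𝓝 (-1 - Real.log 2)) := by
  have hj1 : ∀ᶠ n : ℕ in atTop, 1 ≤ j n := hj.eventually_ge_atTop 1
  have hjn : ∀ᶠ n : ℕ in atTop, (j n : ℝ) ≤ n := by
    filter_upwards [eventually_ge_atTop 2] with n hn
    have h := abs_le.mp (hb n)
    have hn2 : (2:ℝ) ≤ n := by exact_mod_cast hn
    linarith [h.2]
  have hhalf : Tendsto (fun n : ℕ => (j n : ℝ) / n) atTop (𝓝 (1 / 2)) := by
    have herr : Tendsto (fun n : ℕ => (2 * (j n : ℝ) - n) / (2 * n)) atTop (𝓝 0) := by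
      apply squeeze_zero_norm (a := fun n : ℕ => 1 / (n:ℝ))
      · intro n
        rcases Nat.eq_zero_or_pos n with h0 | h0
        · simp [h0]
        · have hn0 : (0:ℝ) < n := by exact_mod_cast h0
          rw [Real.norm_eq_abs, abs_div, abs_of_pos (show (0:ℝ) < 2 * n by linarith)]
          rw [div_le_div_iff₀ (by linarith) hn0]
          nlinarith [mul_le_mul_of_nonneg_right (hb n) hn0.le]
      · exact tendsto_one_div_atTop_nhds_zero_nat
    have hsum : Tendsto (fun n : ℕ => 1 / 2 + (2 * (j n : ℝ) - n) / (2 * n)) atTop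
        (𝓝 (1/2)) := by
      simpa using (tendsto_const_nhds (x := (1:ℝ)/2)).add herr
    refine hsum.congr' ?_
    filter_upwards [eventually_ge_atTop 1] with n hn
    have hn0 : (0:ℝ) < n := by exact_mod_cast hn
    field_simp
    ring
  have hlogj : Tendsto (fun n : ℕ => Real.log (j n) / n) atTop (𝓝 0) := by
    have hln : Tendsto (fun n : ℕ => Real.log n / n) atTop (𝓝 0) :=
      Real.isLittleO_log_id_atTop.tendsto_div_nhds_zero.comp tendsto_natCast_atTop_atTop
    apply squeeze_zero' (g := fun n : ℕ => Real.log n / n) (t₀ := atTop)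
    · filter_upwards [hj1] with n hn
      have h1 : (1:ℝ) ≤ j n := by exact_mod_cast hn
      positivity
    · filter_upwards [hjn, hj1, eventually_ge_atTop 1] with n h1 h2 h3
      have hn0 : (0:ℝ) < n := by exact_mod_cast h3
      have hj0 : (0:ℝ) < j n := by exact_mod_cast h2
      exact div_le_div_of_nonneg_right (Real.log_le_log hj0 h1) hn0.le
    · exact hln
  have hterm1 : Tendsto (fun n : ℕ => 2 * ((j n : ℝ) / n) *
      (Real.log ((j n)!) / (j n) - Real.log (j n))) atTop (𝓝 (-1)) := by
    have h := (hhalf.const_mul 2).mul (key_fact.comp hj)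
    simpa using h
  have hterm2 : Tendsto (fun n : ℕ => (2 * ((j n : ℝ)) / n - 1) * Real.log (j n)) atTop
      (𝓝 0) := by
    apply squeeze_zero_norm' (a := fun n : ℕ => 2 * (Real.log (j n) / n))
    · filter_upwards [hj1, eventually_ge_atTop 1] with n h2 h3
      have hn0 : (0:ℝ) < n := by exact_mod_cast h3
      have hj0 : (1:ℝ) ≤ j n := by exact_mod_cast h2
      have hlog0 : 0 ≤ Real.log (j n) := Real.log_nonneg hj0
      rw [Real.norm_eq_abs, abs_mul, abs_of_nonneg hlog0]
      have habs : |2 * ((j n : ℝ)) / n - 1| ≤ 2 / n := by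
        have heq : 2 * ((j n : ℝ)) / n - 1 = (2 * (j n : ℝ) - n) / n := by
          field_simp
        rw [heq, abs_div, abs_of_pos hn0]
        exact div_le_div_of_nonneg_right (hb n) hn0.le
      calc |2 * ((j n : ℝ)) / n - 1| * Real.log (j n)
          ≤ 2 / n * Real.log (j n) := mul_le_mul_of_nonneg_right habs hlog0
        _ = 2 * (Real.log (j n) / n) := by ring
    · simpa using hlogj.const_mul 2
  have hterm3 : Tendsto (fun n : ℕ => Real.log ((j n : ℝ) / n)) atTop (𝓝 (-Real.log 2)) := by
    have h : Tendsto (fun n : ℕ => Real.log ((j n : ℝ) / n)) atTop (𝓝 (Real.log (1/2))) :=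
      ((Real.continuousAt_log (by norm_num)).tendsto).comp hhalf
    simpa [one_div, Real.log_inv] using h
  have hsum := (hterm1.add hterm2).add hterm3
  rw [show (-1 : ℝ) + 0 + -Real.log 2 = -1 - Real.log 2 by ring] at hsum
  refine hsum.congr' ?_
  filter_upwards [hj1, eventually_ge_atTop 1] with n h2 h3
  have hn0 : (0:ℝ) < n := by exact_mod_cast h3
  have hj0 : (0:ℝ) < j n := by exact_mod_cast h2
  rw [Real.log_div hj0.ne' hn0.ne']
  field_simp
  ring

lemma gamma_log_lim : Tendsto (fun n : ℕ =>
    2 * Real.log (Real.Gamma ((n:ℝ)/2 + 1)) / n - Real.log n) atTop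
    (𝓝 (-1 - Real.log 2)) := by
  have hj1 : Tendsto (fun n : ℕ => n / 2) atTop atTop := by
    apply tendsto_atTop_atTop.mpr
    intro b
    exact ⟨2 * b, fun n hn => by omega⟩
  have hj2 : Tendsto (fun n : ℕ => n / 2 + 1) atTop atTop :=
    tendsto_atTop_mono (fun n => by omega) hj1
  have hb1 : ∀ n : ℕ, |2 * (((n / 2 : ℕ)) : ℝ) - n| ≤ 2 := by
    intro n
    have h1 : (2 * (n / 2) : ℕ) ≤ n := by omega
    have h2 : n ≤ (2 * (n / 2) + 2 : ℕ) := by omega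
    have h1' : 2 * (((n / 2 : ℕ)) : ℝ) ≤ n := by exact_mod_cast h1
    have h2' : (n:ℝ) ≤ 2 * (((n / 2 : ℕ)) : ℝ) + 2 := by exact_mod_cast h2
    rw [abs_le]; constructor <;> linarith
  have hb2 : ∀ n : ℕ, |2 * (((n / 2 + 1 : ℕ)) : ℝ) - n| ≤ 2 := by
    intro n
    have h1 : n ≤ (2 * (n / 2 + 1) : ℕ) := by omega
    have h2 : (2 * (n / 2 + 1) : ℕ) ≤ n + 2 := by omega
    have h1' : (n:ℝ) ≤ 2 * (((n / 2 + 1 : ℕ)) : ℝ) := by exact_mod_cast h1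
    have h2' : 2 * (((n / 2 + 1 : ℕ)) : ℝ) ≤ (n:ℝ) + 2 := by exact_mod_cast h2
    rw [abs_le]; constructor <;> linarith
  have hlow := fact_half_lim _ hj1 hb1
  have hup := fact_half_lim _ hj2 hb2
  refine tendsto_of_tendsto_of_tendsto_of_le_of_le' hlow hup ?_ ?_
  · filter_upwards [eventually_ge_atTop 2] with n hn
    have hn2 : (2:ℝ) ≤ n := by exact_mod_cast hn
    have hk1 : 1 ≤ n / 2 := by omega
    have hk1' : (1:ℝ) ≤ ((n / 2 : ℕ) : ℝ) := by exact_mod_cast hk1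
    have hkn : ((n / 2 : ℕ) : ℝ) ≤ (n:ℝ) / 2 := by
      have h : (2 * (n / 2) : ℕ) ≤ n := by omega
      have h' : 2 * ((n / 2 : ℕ) : ℝ) ≤ n := by exact_mod_cast h
      linarith
    have hΓpos : (0:ℝ) < Real.Gamma ((n:ℝ)/2 + 1) :=
      Real.Gamma_pos_of_pos (by linarith)
    have hfac : (0:ℝ) < ((n / 2 : ℕ)! : ℝ) := by positivity
    have hle : ((n / 2 : ℕ)! : ℝ) ≤ Real.Gamma ((n:ℝ)/2 + 1) := by
      rw [← Real.Gamma_nat_eq_factorial (n / 2)]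
      apply (Real.Gamma_strictMonoOn_Ici.monotoneOn)
      · simp only [Set.mem_Ici]; linarith
      · simp only [Set.mem_Ici]; linarith
      · linarith
    have hlog : Real.log ((n / 2 : ℕ)!) ≤ Real.log (Real.Gamma ((n:ℝ)/2 + 1)) :=
      Real.log_le_log hfac hle
    have hn0 : (0:ℝ) < n := by linarith
    have := div_le_div_of_nonneg_right (by linarith : 2 * Real.log ((n / 2 : ℕ)!) ≤
      2 * Real.log (Real.Gamma ((n:ℝ)/2 + 1))) hn0.le
    linarith
  · filter_upwards [eventually_ge_atTop 2] with n hn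
    have hn2 : (2:ℝ) ≤ n := by exact_mod_cast hn
    have hkn : (n:ℝ) / 2 ≤ ((n / 2 + 1 : ℕ) : ℝ) := by
      have h : n ≤ (2 * (n / 2 + 1) : ℕ) := by omega
      have h' : (n:ℝ) ≤ 2 * ((n / 2 + 1 : ℕ) : ℝ) := by exact_mod_cast h
      linarith
    have hΓpos : (0:ℝ) < Real.Gamma ((n:ℝ)/2 + 1) :=
      Real.Gamma_pos_of_pos (by linarith)
    have hle : Real.Gamma ((n:ℝ)/2 + 1) ≤ ((n / 2 + 1 : ℕ)! : ℝ) := by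
      rw [← Real.Gamma_nat_eq_factorial (n / 2 + 1)]
      apply (Real.Gamma_strictMonoOn_Ici.monotoneOn)
      · simp only [Set.mem_Ici]; linarith
      · simp only [Set.mem_Ici]
        have : (1:ℝ) ≤ ((n / 2 + 1 : ℕ) : ℝ) := by exact_mod_cast Nat.le_add_left 1 (n/2)
        linarith
      · push_cast at hkn ⊢; linarith
    have hlog : Real.log (Real.Gamma ((n:ℝ)/2 + 1)) ≤ Real.log ((n / 2 + 1 : ℕ)!) :=
      Real.log_le_log hΓpos hle
    have hn0 : (0:ℝ) < n := by linarith
    have := div_le_div_of_nonneg_right (by linarith : 2 * Real.log (Real.Gamma ((n:ℝ)/2 + 1)) ≤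
      2 * Real.log ((n / 2 + 1 : ℕ)!)) hn0.le
    linarith

lemma nb_lim : Tendsto (fun n : ℕ => (n : ℝ) / unitBallRadius n ^ 2) atTop
    (𝓝 (2 * π * Real.exp 1)) := by
  have hexp : Tendsto (fun n : ℕ => Real.exp
      (-(2 * Real.log (Real.Gamma ((n:ℝ)/2 + 1)) / n - Real.log n) + Real.log π)) atTop
      (𝓝 (Real.exp (-(-1 - Real.log 2) + Real.log π))) :=
    (Real.continuous_exp.tendsto _).comp (gamma_log_lim.neg.add_const (Real.log π))
  have hval : Real.exp (-(-1 - Real.log 2) + Real.log π) = 2 * π * Real.exp 1 := by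
    rw [show -(-1 - Real.log 2) + Real.log π = Real.log 2 + Real.log π + 1 by ring,
      Real.exp_add, Real.exp_add, Real.exp_log two_pos, Real.exp_log Real.pi_pos]
  rw [hval] at hexp
  refine hexp.congr' ?_
  filter_upwards [eventually_ge_atTop 1] with n hn
  have hn0 : (0:ℝ) < n := by exact_mod_cast hn
  have hΓ : (0:ℝ) < Real.Gamma ((n:ℝ)/2 + 1) := Real.Gamma_pos_of_pos (by positivity)
  have hsq : unitBallRadius n ^ 2 = Real.Gamma ((n:ℝ)/2 + 1) ^ ((2:ℝ)/n) / π := by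
    unfold unitBallRadius
    rw [div_pow, Real.sq_sqrt Real.pi_pos.le]
    congr 1
    rw [← Real.rpow_natCast (Real.Gamma ((n:ℝ)/2 + 1) ^ ((1:ℝ)/n)) 2,
      ← Real.rpow_mul hΓ.le]
    congr 1
    push_cast
    ring
  rw [hsq, Real.rpow_def_of_pos hΓ, div_div_eq_mul_div]
  rw [show (n:ℝ) * π / Real.exp (Real.log (Real.Gamma ((n:ℝ)/2 + 1)) * ((2:ℝ)/n))
      = Real.exp (Real.log n + Real.log π - Real.log (Real.Gamma ((n:ℝ)/2 + 1)) * ((2:ℝ)/n)) by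
    rw [Real.exp_sub, Real.exp_add, Real.exp_log hn0, Real.exp_log Real.pi_pos]]
  congr 1
  ring

lemma log_one_sub_bound {t : ℝ} (h0 : 0 ≤ t) (h2 : t ≤ 1/2) :
    |Real.log (1 - t) + t| ≤ 2 * t ^ 2 := by
  have ht1 : (0:ℝ) < 1 - t := by linarith
  have hub : Real.log (1 - t) + t ≤ 0 := by
    have := Real.log_le_sub_one_of_pos ht1
    linarith
  have hlb : -(2 * t ^ 2) ≤ Real.log (1 - t) + t := by
    have hinv : (0:ℝ) < (1 - t)⁻¹ := by positivity
    have h := Real.log_le_sub_one_of_pos hinv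
    rw [Real.log_inv] at h
    have hiv : (1 - t)⁻¹ ≤ 1 + t + 2 * t ^ 2 := by
      rw [inv_eq_one_div, div_le_iff₀ ht1]
      nlinarith
    linarith
  rw [abs_le]
  exact ⟨hlb, by nlinarith⟩

lemma exp_sub_exp_le {a b : ℝ} (hab : a ≤ b) (hb : b ≤ 0) :
    Real.exp b - Real.exp a ≤ b - a := by
  have h1 := Real.add_one_le_exp (a - b)
  have h2 : Real.exp b ≤ 1 := (Real.exp_le_exp.mpr hb).trans_eq Real.exp_zero
  have h3 : Real.exp b * (a - b + 1) ≤ Real.exp b * Real.exp (a - b) :=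
    mul_le_mul_of_nonneg_left h1 (Real.exp_pos b).le
  rw [← Real.exp_add, show b + (a - b) = a by ring] at h3
  nlinarith [Real.exp_pos b]

lemma exp_dist_le {a b : ℝ} (ha : a ≤ 0) (hb : b ≤ 0) :
    |Real.exp a - Real.exp b| ≤ |a - b| := by
  rcases le_total a b with h | h
  · rw [abs_sub_comm, abs_of_nonneg (sub_nonneg.mpr (Real.exp_le_exp.mpr h)),
      abs_sub_comm, abs_of_nonneg (sub_nonneg.mpr h)]
    exact exp_sub_exp_le h hb
  · rw [abs_of_nonneg (sub_nonneg.mpr (Real.exp_le_exp.mpr h)),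
      abs_of_nonneg (sub_nonneg.mpr h)]
    exact exp_sub_exp_le h ha

set_option maxHeartbeats 1000000 in
/-- For `0 < δ < d`, the functions `x ↦ (1 - x²/Rₙ²)^((n-1)/2)` converge uniformly on
`[δ, d]` to `x ↦ exp (-π e x²)` as `n → ∞`. -/
theorem tendstoUniformlyOn_slab_density (δ d : ℝ) (hδ : 0 < δ) (hδd : δ < d) :
    TendstoUniformlyOn
      (fun (n : ℕ) (x : ℝ) => (1 - x ^ 2 / unitBallRadius n ^ 2) ^ (((n : ℝ) - 1) / 2))
      (fun x => Real.exp (-(π * Real.exp 1) * x ^ 2))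
      atTop (Set.Icc δ d) := by
  have hd0 : (0:ℝ) < d := hδ.trans hδd
  have hc := nb_lim
  have hbnn : ∀ n : ℕ, 0 ≤ (unitBallRadius n ^ 2)⁻¹ :=
    fun n => inv_nonneg.mpr (sq_nonneg _)
  have hb0 : Tendsto (fun n : ℕ => (unitBallRadius n ^ 2)⁻¹) atTop (𝓝 0) := by
    have h := hc.mul tendsto_one_div_atTop_nhds_zero_nat
    rw [mul_zero] at h
    refine h.congr' ?_
    filter_upwards [eventually_ge_atTop 1] with n hn
    have hn0 : (0:ℝ) < n := by exact_mod_cast hn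
    rw [div_mul_eq_mul_div, mul_one_div, div_self hn0.ne', one_div]
  have hnb2 : Tendsto (fun n : ℕ => (n:ℝ) * ((unitBallRadius n ^ 2)⁻¹)^2) atTop (𝓝 0) := by
    have h := hc.mul hb0
    rw [mul_zero] at h
    refine h.congr ?_
    intro n
    simp only [div_eq_mul_inv]
    ring
  have hhalf : Tendsto (fun n : ℕ => (((n:ℝ) - 1)/2) * (unitBallRadius n ^ 2)⁻¹) atTop
      (𝓝 (π * Real.exp 1)) := by
    have h := (hc.div_const 2).sub (hb0.div_const 2)
    rw [show 2*π*Real.exp 1/2 - 0/2 = π * Real.exp 1 by ring] at h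
    refine h.congr ?_
    intro n
    simp only [div_eq_mul_inv]
    ring
  rw [Metric.tendstoUniformlyOn_iff]
  intro ε hε
  filter_upwards [eventually_ge_atTop 1,
    hb0.eventually_lt_const (show (0:ℝ) < 1/(2*d^2) by positivity),
    hnb2.eventually_lt_const (show (0:ℝ) < ε/(2*d^4) by positivity),
    Metric.tendsto_nhds.mp hhalf (ε/(2*d^2)) (by positivity)] with n hn1 hn2 hn3 hn4
  intro x hx
  obtain ⟨hx1, hx2⟩ := hx
  set b := (unitBallRadius n ^ 2)⁻¹ with hbdef
  have hbn : 0 ≤ b := hbnn n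
  have hx0 : 0 < x := lt_of_lt_of_le hδ hx1
  have hx2d : x^2 ≤ d^2 := by nlinarith
  have ht : b * x^2 ≤ 1/2 := by
    have h1 : b * x^2 ≤ b * d^2 := mul_le_mul_of_nonneg_left hx2d hbn
    have h2 : b * d^2 ≤ 1/(2*d^2) * d^2 := mul_le_mul_of_nonneg_right hn2.le (by positivity)
    have h3 : 1/(2*d^2) * d^2 = 1/2 := by field_simp
    linarith
  have htnn : 0 ≤ b * x^2 := mul_nonneg hbn (sq_nonneg x)
  have h1t : 0 < 1 - b * x^2 := by linarith
  have hdivb : x^2 / unitBallRadius n ^ 2 = b * x^2 := by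
    rw [hbdef, div_eq_mul_inv, mul_comm]
  have hFx : (1 - x^2 / unitBallRadius n ^ 2) ^ (((n:ℝ) - 1)/2)
      = Real.exp ((((n:ℝ) - 1)/2) * Real.log (1 - b * x^2)) := by
    rw [hdivb, Real.rpow_def_of_pos h1t, mul_comm]
  rw [Real.dist_eq, hFx]
  set m := ((n:ℝ) - 1)/2 with hmdef
  have hn0 : (1:ℝ) ≤ n := by exact_mod_cast hn1
  have hmnn : 0 ≤ m := by rw [hmdef]; linarith
  have hlg : Real.log (1 - b*x^2) ≤ 0 := Real.log_nonpos (by linarith) (by linarith)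
  have hA : m * Real.log (1 - b*x^2) ≤ 0 := mul_nonpos_of_nonneg_of_nonpos hmnn hlg
  have hB : -(π * Real.exp 1) * x^2 ≤ 0 := by
    have h := mul_nonneg (mul_nonneg Real.pi_pos.le (Real.exp_pos 1).le) (sq_nonneg x)
    nlinarith [h]
  have step1 : |Real.exp (-(π * Real.exp 1) * x^2) - Real.exp (m * Real.log (1 - b*x^2))|
      ≤ |(-(π * Real.exp 1) * x^2) - m * Real.log (1 - b*x^2)| := exp_dist_le hB hA
  have hdecomp : (-(π * Real.exp 1) * x^2) - m * Real.log (1 - b*x^2)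
      = -(m * Real.log (1 - b*x^2) + m * (b*x^2)) + (m * (b*x^2) - π * Real.exp 1 * x^2) := by
    ring
  have hlog2 : |Real.log (1 - b*x^2) + b*x^2| ≤ 2*(b*x^2)^2 := log_one_sub_bound htnn ht
  have key1 : |m * Real.log (1 - b*x^2) + m * (b*x^2)| ≤ m * (2*(b*x^2)^2) := by
    rw [show m * Real.log (1 - b*x^2) + m * (b*x^2)
        = m * (Real.log (1 - b*x^2) + b*x^2) by ring, abs_mul, abs_of_nonneg hmnn]
    exact mul_le_mul_of_nonneg_left hlog2 hmnn
  have hx4 : (x^2)^2 ≤ (d^2)^2 := by nlinarith [sq_nonneg x]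
  have hval1 : m * (2*(b*x^2)^2) ≤ (n:ℝ) * b^2 * d^4 := by
    have hm2 : m * 2 ≤ n := by rw [hmdef]; linarith
    have hbb : 0 ≤ b^2 := sq_nonneg b
    have h5 : (b*x^2)^2 = b^2 * (x^2)^2 := by ring
    have h6 : b^2 * (x^2)^2 ≤ b^2 * (d^2)^2 := mul_le_mul_of_nonneg_left hx4 hbb
    calc m * (2*(b*x^2)^2) = (m*2) * (b^2 * (x^2)^2) := by ring
      _ ≤ (n:ℝ) * (b^2 * (d^2)^2) :=
          mul_le_mul hm2 h6 (by positivity) (Nat.cast_nonneg n)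
      _ = (n:ℝ) * b^2 * d^4 := by ring
  have hε1 : (n:ℝ) * b^2 * d^4 < ε/2 := by
    have h10 : (n:ℝ) * b^2 * d^4 < ε/(2*d^4) * d^4 :=
      mul_lt_mul_of_pos_right hn3 (by positivity)
    have h11 : ε/(2*d^4) * d^4 = ε/2 := by field_simp
    linarith
  have key2 : |m * (b*x^2) - π * Real.exp 1 * x^2| ≤ |m*b - π*Real.exp 1| * d^2 := by
    rw [show m*(b*x^2) - π*Real.exp 1*x^2 = (m*b - π*Real.exp 1)*x^2 by ring,
      abs_mul, abs_of_nonneg (sq_nonneg x)]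
    exact mul_le_mul_of_nonneg_left hx2d (abs_nonneg _)
  have hn4' : |m*b - π*Real.exp 1| < ε/(2*d^2) := by
    rw [Real.dist_eq] at hn4
    exact hn4
  have hε2 : |m*b - π*Real.exp 1| * d^2 < ε/2 := by
    have h8 : |m*b - π*Real.exp 1| * d^2 < ε/(2*d^2) * d^2 :=
      mul_lt_mul_of_pos_right hn4' (by positivity)
    have h9 : ε/(2*d^2) * d^2 = ε/2 := by field_simp
    linarith
  calc |Real.exp (-(π * Real.exp 1) * x^2) - Real.exp (m * Real.log (1 - b*x^2))|
      ≤ |(-(π * Real.exp 1) * x^2) - m * Real.log (1 - b*x^2)| := step1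
    _ ≤ |m * Real.log (1 - b*x^2) + m * (b*x^2)| + |m * (b*x^2) - π * Real.exp 1 * x^2| := by
        rw [hdecomp]
        exact (abs_add_le _ _).trans (by rw [abs_neg])
    _ < ε/2 + ε/2 :=
        add_lt_add (lt_of_le_of_lt (key1.trans hval1) hε1) (lt_of_le_of_lt key2 hε2)
    _ = ε := by ring
end

section
/- Let S_n ⊂ ℝ^n be the ball of unit volume centered at the origin and let V_n(d) be the Lebesgue volume of the slab {x ∈ S_n : 0 ≤ x₁ ≤ d}. Then for every d > 0, V_n(d) → √e · ∫₀^d exp(-π e x²) dx as n → ∞. -/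
open Real Filter MeasureTheory

section AuxLemmas
open Topology

/-- `log n! / n - (log n - 1) → 0`, a weak form of Stirling's formula. -/
lemma tendsto_log_factorial :
    Tendsto (fun n : ℕ => Real.log n.factorial / n - (Real.log n - 1)) atTop (𝓝 0) := by
  have hs : Tendsto (fun n => Real.log (Stirling.stirlingSeq n)) atTop
      (𝓝 (Real.log (Real.sqrt π))) :=
    ((Real.continuousAt_log (by positivity)).tendsto).comp Stirling.tendsto_stirlingSeq_sqrt_pi
  have h1 : Tendsto (fun n : ℕ => Real.log (Stirling.stirlingSeq n) / n) atTop (𝓝 0) := by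
    have := hs.div_atTop (tendsto_natCast_atTop_atTop (R := ℝ))
    simpa using this
  have hlog : Tendsto (fun x : ℝ => Real.log x / x) atTop (𝓝 0) :=
    Real.isLittleO_log_id_atTop.tendsto_div_nhds_zero
  have h2 : Tendsto (fun n : ℕ => Real.log (2 * n) / (2 * n)) atTop (𝓝 0) := by
    refine hlog.comp ?_
    exact (tendsto_natCast_atTop_atTop (R := ℝ)).const_mul_atTop two_pos
  have key : Tendsto (fun n : ℕ => Real.log (Stirling.stirlingSeq n) / n
      + Real.log (2 * n) / (2 * n)) atTop (𝓝 0) := by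
    simpa using h1.add h2
  refine key.congr' ?_
  filter_upwards [eventually_ge_atTop 1] with n hn
  have hn0 : (0:ℝ) < n := by exact_mod_cast hn
  have hfact : (0:ℝ) < n.factorial := by exact_mod_cast n.factorial_pos
  have hform := Stirling.log_stirlingSeq_formula n
  have hlogne : Real.log ((n : ℝ) / Real.exp 1) = Real.log n - 1 := by
    rw [Real.log_div hn0.ne' (Real.exp_ne_zero 1), Real.log_exp]
  have h2n : Real.log (2 * (n:ℝ)) = Real.log 2 + Real.log n := by
    rw [Real.log_mul two_ne_zero hn0.ne']
  field_simp
  rw [hform, hlogne, h2n]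
  rw [mul_comm (n:ℝ) 2, h2n]
  ring

lemma nat_cast_half_le (m : ℕ) : ((m / 2 : ℕ) : ℝ) ≤ (m:ℝ)/2 := Nat.cast_div_le

lemma nat_le_cast_half (m : ℕ) : (m:ℝ) ≤ 2 * ((m / 2 : ℕ):ℝ) + 1 := by
  have h : m ≤ 2 * (m/2) + 1 := by omega
  exact_mod_cast h

lemma tendsto_half_atTop : Tendsto (fun m : ℕ => ((m / 2 : ℕ) : ℝ)) atTop atTop := by
  apply tendsto_atTop_atTop.2
  intro b
  obtain ⟨N, hN⟩ := exists_nat_ge b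
  exact ⟨2 * N, fun m hm => le_trans hN (by exact_mod_cast Nat.le_div_iff_mul_le two_pos |>.2 (by omega))⟩

lemma tendsto_half_div : Tendsto (fun m : ℕ => ((m / 2 : ℕ) : ℝ) / m) atTop (𝓝 (1/2)) := by
  have h0 : Tendsto (fun m : ℕ => 1/2 - 1/(2*(m:ℝ))) atTop (𝓝 (1/2)) := by
    have h2 : Tendsto (fun m : ℕ => (2*(m:ℝ))) atTop atTop :=
      (tendsto_natCast_atTop_atTop (R := ℝ)).const_mul_atTop two_pos
    have := h2.inv_tendsto_atTop
    simpa [one_div] using (tendsto_const_nhds (x := (1/2:ℝ))).sub this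
  refine tendsto_of_tendsto_of_tendsto_of_le_of_le' h0 tendsto_const_nhds ?_ ?_
  · filter_upwards [eventually_ge_atTop 1] with m hm
    have hm0 : (0:ℝ) < m := by exact_mod_cast hm
    have h1 := nat_le_cast_half m
    rw [div_sub_div _ _ (by norm_num : (2:ℝ) ≠ 0) (by positivity), div_le_div_iff₀ (by positivity) hm0]
    nlinarith
  · filter_upwards [eventually_ge_atTop 1] with m hm
    have hm0 : (0:ℝ) < m := by exact_mod_cast hm
    rw [div_le_iff₀ hm0]
    linarith [nat_cast_half_le m]

lemma tendsto_half_atTop' : Tendsto (fun m : ℕ => m / 2) atTop atTop := by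
  apply tendsto_atTop_atTop.2
  intro b
  exact ⟨2 * b, fun m hm => by omega⟩

lemma tendsto_log_div_atTop : Tendsto (fun x : ℝ => Real.log x / x) atTop (𝓝 0) :=
  Real.isLittleO_log_id_atTop.tendsto_div_nhds_zero

lemma bound_tendsto : Tendsto (fun m : ℕ => (Real.log ((m:ℝ)/2) + 1)/(2*m)) atTop (𝓝 0) := by
  have h1 : Tendsto (fun m : ℕ => Real.log ((m:ℝ)/2) / (2*(m:ℝ))) atTop (𝓝 0) := by
    have hcomp : Tendsto (fun m : ℕ => Real.log ((m:ℝ)/2) / ((m:ℝ)/2)) atTop (𝓝 0) :=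
      tendsto_log_div_atTop.comp ((tendsto_natCast_atTop_atTop (R := ℝ)).atTop_div_const two_pos)
    have := hcomp.mul (tendsto_const_nhds (x := (1/4 : ℝ)))
    rw [zero_mul] at this
    refine this.congr' ?_
    filter_upwards [eventually_ge_atTop 1] with m hm
    have hm0 : (0:ℝ) < m := by exact_mod_cast hm
    field_simp
    ring
  have h2 : Tendsto (fun m : ℕ => 1 / (2*(m:ℝ))) atTop (𝓝 0) :=
    (tendsto_const_nhds (x := (1:ℝ))).div_atTop
      ((tendsto_natCast_atTop_atTop (R := ℝ)).const_mul_atTop two_pos)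
  have := h1.add h2
  rw [add_zero] at this
  exact this.congr fun m => by rw [← add_div]

lemma lower_tendsto : Tendsto (fun m : ℕ =>
    Real.log (m/2).factorial / m - (Real.log m - Real.log (2*Real.exp 1))/2) atTop (𝓝 0) := by
  have hδ : Tendsto (fun m : ℕ => Real.log (m/2).factorial / (m/2 : ℕ)
      - (Real.log (m/2 : ℕ) - 1)) atTop (𝓝 0) :=
    tendsto_log_factorial.comp tendsto_half_atTop'
  have c1 : Tendsto (fun m : ℕ => ((m/2 : ℕ):ℝ)/m * (Real.log (m/2).factorial / (m/2 : ℕ)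
      - (Real.log (m/2 : ℕ) - 1))) atTop (𝓝 0) := by
    simpa using tendsto_half_div.mul hδ
  have hratio : Tendsto (fun m : ℕ => 2 * ((m/2 : ℕ):ℝ) / m) atTop (𝓝 1) := by
    have := tendsto_half_div.const_mul (2:ℝ)
    simpa [mul_div_assoc] using this
  have c2 : Tendsto (fun m : ℕ => ((m/2 : ℕ):ℝ)/m * Real.log (2 * ((m/2 : ℕ):ℝ) / m))
      atTop (𝓝 0) := by
    have hl : Tendsto (fun m : ℕ => Real.log (2 * ((m/2 : ℕ):ℝ) / m)) atTop (𝓝 0) := by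
      have := (Real.continuousAt_log one_ne_zero).tendsto.comp hratio
      simpa [Function.comp_def] using this
    simpa using tendsto_half_div.mul hl
  have c3 : Tendsto (fun m : ℕ => (2 * ((m/2 : ℕ):ℝ) - m)/(2*m) * (Real.log ((m:ℝ)/2) - 1))
      atTop (𝓝 0) := by
    apply squeeze_zero_norm' (a := fun m : ℕ => (Real.log ((m:ℝ)/2) + 1)/(2*m)) ?_ bound_tendsto
    filter_upwards [eventually_ge_atTop 2] with m hm
    have hm0 : (0:ℝ) < m := by exact_mod_cast (by omega : 0 < m)
    have hm2 : (1:ℝ) ≤ (m:ℝ)/2 := by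
      rw [le_div_iff₀ two_pos]; exact_mod_cast by omega
    have hlognn : 0 ≤ Real.log ((m:ℝ)/2) := Real.log_nonneg hm2
    have habs : |2 * ((m/2 : ℕ):ℝ) - m| ≤ 1 := by
      rw [abs_le]; constructor <;> nlinarith [nat_cast_half_le m, nat_le_cast_half m]
    have habs2 : |Real.log ((m:ℝ)/2) - 1| ≤ Real.log ((m:ℝ)/2) + 1 := by
      rw [abs_le]; constructor <;> linarith
    rw [norm_mul, norm_div, Real.norm_eq_abs, Real.norm_eq_abs, Real.norm_eq_abs,
      abs_of_pos (by positivity : (0:ℝ) < 2*(m:ℝ))]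
    calc |2 * ((m/2 : ℕ):ℝ) - (m:ℝ)| / (2*(m:ℝ)) * |Real.log ((m:ℝ)/2) - 1|
        ≤ 1 / (2*(m:ℝ)) * (Real.log ((m:ℝ)/2) + 1) := by
          apply mul_le_mul ?_ habs2 (abs_nonneg _) (by positivity)
          gcongr
      _ = (Real.log ((m:ℝ)/2) + 1)/(2*m) := by ring
  have hsum := (c1.add c2).add c3
  simp only [add_zero] at hsum
  refine hsum.congr' ?_
  filter_upwards [eventually_ge_atTop 2] with m hm
  have hk1 : 1 ≤ m / 2 := by omega
  have hk0 : (0:ℝ) < ((m/2 : ℕ):ℝ) := by exact_mod_cast hk1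
  have hm0 : (0:ℝ) < m := by exact_mod_cast (by omega : 0 < m)
  have hfact : (0:ℝ) < ((m/2).factorial : ℝ) := by exact_mod_cast (m/2).factorial_pos
  have e1 : Real.log (2 * ((m/2 : ℕ):ℝ) / m) = Real.log 2 + Real.log ((m/2 : ℕ):ℝ) - Real.log m := by
    rw [Real.log_div (by positivity) hm0.ne', Real.log_mul two_ne_zero hk0.ne']
  have e2 : Real.log ((m:ℝ)/2) = Real.log m - Real.log 2 := Real.log_div hm0.ne' two_ne_zero
  have e3 : Real.log (2*Real.exp 1) = Real.log 2 + 1 := by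
    rw [Real.log_mul two_ne_zero (Real.exp_ne_zero 1), Real.log_exp]
  rw [e1, e2, e3]
  field_simp
  ring

lemma log_succ_div_tendsto : Tendsto (fun m : ℕ => Real.log (((m/2 : ℕ):ℝ)+1) / m) atTop (𝓝 0) := by
  apply squeeze_zero_norm' (a := fun m : ℕ => Real.log ((m:ℝ)+1) / ((m:ℝ)+1) * (((m:ℝ)+1)/m))
  · filter_upwards [eventually_ge_atTop 1] with m hm
    have hm0 : (0:ℝ) < m := by exact_mod_cast hm
    have h1 : (1:ℝ) ≤ ((m/2 : ℕ):ℝ)+1 := by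
      have : (0:ℝ) ≤ ((m/2 : ℕ):ℝ) := Nat.cast_nonneg _
      linarith
    have h2 : ((m/2 : ℕ):ℝ)+1 ≤ (m:ℝ)+1 := by
      have := nat_cast_half_le m; linarith
    have hnn : 0 ≤ Real.log (((m/2 : ℕ):ℝ)+1) := Real.log_nonneg h1
    rw [Real.norm_eq_abs, abs_of_nonneg (by positivity)]
    have hrw : Real.log ((m:ℝ)+1) / ((m:ℝ)+1) * (((m:ℝ)+1)/m) = Real.log ((m:ℝ)+1) / m := by
      field_simp
    rw [hrw]
    gcongr <;> linarith
  · have h1 : Tendsto (fun m : ℕ => Real.log ((m:ℝ)+1) / ((m:ℝ)+1)) atTop (𝓝 0) :=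
      tendsto_log_div_atTop.comp (tendsto_atTop_add_const_right _ 1 (tendsto_natCast_atTop_atTop (R := ℝ)))
    have h2 : Tendsto (fun m : ℕ => ((m:ℝ)+1)/m) atTop (𝓝 1) := by
      have : Tendsto (fun m : ℕ => 1 + 1/(m:ℝ)) atTop (𝓝 1) := by
        have := tendsto_one_div_atTop_nhds_zero_nat (𝕜 := ℝ)
        simpa using (tendsto_const_nhds (x := (1:ℝ))).add this
      refine this.congr' ?_
      filter_upwards [eventually_ge_atTop 1] with m hm
      have hm0 : (0:ℝ) < m := by exact_mod_cast hm
      field_simp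
    simpa using h1.mul h2

lemma upper_tendsto : Tendsto (fun m : ℕ =>
    (Real.log (m/2).factorial + Real.log (((m/2 : ℕ):ℝ)+1)) / m
      - (Real.log m - Real.log (2*Real.exp 1))/2) atTop (𝓝 0) := by
  have := lower_tendsto.add log_succ_div_tendsto
  rw [add_zero] at this
  refine this.congr fun m => ?_
  rw [add_div]
  ring

lemma tendsto_log_gamma_half : Tendsto (fun m : ℕ =>
    Real.log (Real.Gamma ((m:ℝ)/2+1)) / m - (Real.log m - Real.log (2*Real.exp 1))/2)
    atTop (𝓝 0) := by
  refine tendsto_of_tendsto_of_tendsto_of_le_of_le' lower_tendsto upper_tendsto ?_ ?_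
  · filter_upwards [eventually_ge_atTop 2] with m hm
    have hk1 : 1 ≤ m / 2 := by omega
    have hm0 : (0:ℝ) < m := by exact_mod_cast (by omega : 0 < m)
    have hle : ((m/2 : ℕ):ℝ) + 1 ≤ (m:ℝ)/2 + 1 := by linarith [nat_cast_half_le m]
    have hmem1 : ((m/2 : ℕ):ℝ) + 1 ∈ Set.Ici (2:ℝ) := by
      simp only [Set.mem_Ici]
      have : (1:ℝ) ≤ ((m/2 : ℕ):ℝ) := by exact_mod_cast hk1
      linarith
    have hmem2 : (m:ℝ)/2 + 1 ∈ Set.Ici (2:ℝ) := by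
      simp only [Set.mem_Ici]
      have : (2:ℝ) ≤ (m:ℝ) := by exact_mod_cast hm
      linarith
    have hgam : ((m/2).factorial : ℝ) ≤ Real.Gamma ((m:ℝ)/2+1) := by
      rw [← Real.Gamma_nat_eq_factorial]
      exact Real.Gamma_strictMonoOn_Ici.monotoneOn hmem1 hmem2 hle
    have hfact : (0:ℝ) < ((m/2).factorial : ℝ) := by exact_mod_cast (m/2).factorial_pos
    have := Real.log_le_log hfact hgam
    gcongr
  · filter_upwards [eventually_ge_atTop 2] with m hm
    have hk1 : 1 ≤ m / 2 := by omega
    have hm0 : (0:ℝ) < m := by exact_mod_cast (by omega : 0 < m)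
    have hle : (m:ℝ)/2 + 1 ≤ ((m/2 : ℕ):ℝ) + 2 := by
      have := nat_le_cast_half m; linarith
    have hmem1 : (m:ℝ)/2 + 1 ∈ Set.Ici (2:ℝ) := by
      simp only [Set.mem_Ici]
      have : (2:ℝ) ≤ (m:ℝ) := by exact_mod_cast hm
      linarith
    have hmem2 : ((m/2 : ℕ):ℝ) + 2 ∈ Set.Ici (2:ℝ) := by
      have : (0:ℝ) ≤ ((m/2 : ℕ):ℝ) := Nat.cast_nonneg _
      simp only [Set.mem_Ici]; linarith
    have hgam : Real.Gamma ((m:ℝ)/2+1) ≤ ((m/2 + 1).factorial : ℝ) := by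
      have h2 : Real.Gamma (((m/2 + 1 : ℕ):ℝ)+1) = ((m/2+1).factorial : ℝ) :=
        Real.Gamma_nat_eq_factorial _
      rw [← h2]
      refine Real.Gamma_strictMonoOn_Ici.monotoneOn hmem1 ?_ ?_
      · simp only [Set.mem_Ici]; push_cast; linarith [hmem2.out]
      · push_cast; linarith [hle]
    have hgampos : 0 < Real.Gamma ((m:ℝ)/2+1) := Real.Gamma_pos_of_pos (by positivity)
    have hlog := Real.log_le_log hgampos hgam
    have hfacteq : Real.log (((m/2+1).factorial : ℝ))
        = Real.log (m/2).factorial + Real.log (((m/2 : ℕ):ℝ)+1) := by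
      rw [Nat.factorial_succ]
      push_cast
      rw [Real.log_mul (by positivity) (by exact_mod_cast (m/2).factorial_pos.ne')]
      ring
    rw [hfacteq] at hlog
    gcongr

lemma gamma_half_pos (m : ℕ) : 0 < Real.Gamma ((m:ℝ)/2+1) :=
  Real.Gamma_pos_of_pos (by positivity)

lemma unitBallRadius_pos (m : ℕ) : 0 < unitBallRadius m :=
  div_pos (Real.rpow_pos_of_pos (gamma_half_pos m) _) (Real.sqrt_pos.2 Real.pi_pos)

lemma unitBallRadius_pow (m : ℕ) (hm : m ≠ 0) :
    unitBallRadius m ^ m = Real.Gamma ((m:ℝ)/2+1) / Real.sqrt π ^ m := by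
  rw [unitBallRadius, div_pow, ← Real.rpow_natCast ((Real.Gamma ((m:ℝ)/2+1)) ^ ((1:ℝ)/m)) m,
    ← Real.rpow_mul (gamma_half_pos m).le, one_div, inv_mul_cancel₀ (by exact_mod_cast hm),
    Real.rpow_one]

lemma unitBallRadius_sq_eq (m : ℕ) (hm : m ≠ 0) :
    unitBallRadius m ^ 2 / m = Real.exp (2 * (Real.log (Real.Gamma ((m:ℝ)/2+1)) / m
      - (Real.log m - Real.log (2*Real.exp 1))/2)) / (2 * π * Real.exp 1) := by
  have hm0 : (0:ℝ) < m := by exact_mod_cast Nat.pos_of_ne_zero hm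
  have hG := gamma_half_pos m
  set A := Real.log (Real.Gamma ((m:ℝ)/2+1)) / m with hA
  have h1 : unitBallRadius m ^ 2 = Real.exp (2 * A) / π := by
    rw [unitBallRadius, div_pow, Real.sq_sqrt Real.pi_pos.le,
      ← Real.rpow_natCast (_ ^ ((1:ℝ)/m)) 2, ← Real.rpow_mul hG.le,
      Real.rpow_def_of_pos hG]
    congr 1
    rw [hA]
    push_cast
    field_simp
  have e1 : 2 * (A - (Real.log m - Real.log (2*Real.exp 1))/2)
      = 2*A + Real.log (2*Real.exp 1) - Real.log m := by ring
  rw [h1, e1, Real.exp_sub, Real.exp_add, Real.exp_log hm0, Real.exp_log (by positivity)]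
  have hpi := Real.pi_pos
  have hexp := Real.exp_pos 1
  field_simp

lemma tendsto_unitBallRadius_sq : Tendsto (fun m : ℕ => unitBallRadius m ^ 2 / m) atTop
    (𝓝 (1 / (2 * π * Real.exp 1))) := by
  have h : Tendsto (fun m : ℕ => Real.exp (2 * (Real.log (Real.Gamma ((m:ℝ)/2+1)) / m
      - (Real.log m - Real.log (2*Real.exp 1))/2)) / (2 * π * Real.exp 1)) atTop
      (𝓝 (Real.exp (2 * 0) / (2 * π * Real.exp 1))) :=
    ((Real.continuous_exp.tendsto _).comp (tendsto_log_gamma_half.const_mul 2)).div_const _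
  simp only [mul_zero, Real.exp_zero] at h
  refine h.congr' ?_
  filter_upwards [eventually_ge_atTop 1] with m hm
  exact (unitBallRadius_sq_eq m (by omega)).symm

lemma tendsto_m_div_radius_sq : Tendsto (fun m : ℕ => (m:ℝ) / unitBallRadius m ^ 2) atTop
    (𝓝 (2 * π * Real.exp 1)) := by
  have h := tendsto_unitBallRadius_sq.inv₀ (by positivity)
  rw [one_div, inv_inv] at h
  refine h.congr fun m => ?_
  rw [← one_div, one_div_div]

lemma tendsto_radius_sq_atTop : Tendsto (fun m : ℕ => unitBallRadius m ^ 2) atTop atTop := by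
  have h := (tendsto_natCast_atTop_atTop (R := ℝ)).atTop_mul_pos (C := 1/(2*π*Real.exp 1))
    (by positivity) tendsto_unitBallRadius_sq
  refine h.congr' ?_
  filter_upwards [eventually_ge_atTop 1] with m hm
  have hm0 : (0:ℝ) < m := by exact_mod_cast hm
  field_simp

lemma Gamma_add_half_le (x : ℝ) (hx : 0 < x) :
    Real.Gamma (x + 1/2) ≤ Real.Gamma x * Real.sqrt x := by
  have hc := Real.convexOn_log_Gamma
  have h := hc.2 (Set.mem_Ioi.2 hx) (Set.mem_Ioi.2 (by linarith : (0:ℝ) < x + 1))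
    (by norm_num : (0:ℝ) ≤ 1/2) (by norm_num : (0:ℝ) ≤ 1/2) (by norm_num)
  have harg : (1/2 : ℝ) • x + (1/2 : ℝ) • (x + 1) = x + 1/2 := by
    simp [smul_eq_mul]; ring
  rw [harg] at h
  simp only [Function.comp_apply, smul_eq_mul] at h
  rw [Real.Gamma_add_one hx.ne', Real.log_mul hx.ne' (Real.Gamma_pos_of_pos hx).ne'] at h
  have hGpos : 0 < Real.Gamma (x + 1/2) := Real.Gamma_pos_of_pos (by linarith)
  have hRpos : 0 < Real.Gamma x * Real.sqrt x := by positivity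
  rw [← Real.exp_log hGpos, ← Real.exp_log hRpos, Real.exp_le_exp,
    Real.log_mul (Real.Gamma_pos_of_pos hx).ne' (Real.sqrt_pos.2 hx).ne',
    Real.log_sqrt hx.le]
  linarith

lemma le_Gamma_add_half (x : ℝ) (hx : 0 < x) :
    Real.Gamma x * x / Real.sqrt (x + 1/2) ≤ Real.Gamma (x + 1/2) := by
  have hc := Real.convexOn_log_Gamma
  have hx2 : (0:ℝ) < x + 1/2 := by linarith
  have h := hc.2 (Set.mem_Ioi.2 hx2) (Set.mem_Ioi.2 (by linarith : (0:ℝ) < x + 3/2))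
    (by norm_num : (0:ℝ) ≤ 1/2) (by norm_num : (0:ℝ) ≤ 1/2) (by norm_num)
  have harg : (1/2 : ℝ) • (x + 1/2) + (1/2 : ℝ) • (x + 3/2) = x + 1 := by
    simp [smul_eq_mul]; ring
  rw [harg] at h
  simp only [Function.comp_apply, smul_eq_mul] at h
  have h32 : x + 3/2 = (x + 1/2) + 1 := by ring
  rw [h32, Real.Gamma_add_one hx2.ne',
    Real.log_mul hx2.ne' (Real.Gamma_pos_of_pos hx2).ne',
    Real.Gamma_add_one hx.ne', Real.log_mul hx.ne' (Real.Gamma_pos_of_pos hx).ne'] at h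
  have hGpos : 0 < Real.Gamma (x + 1/2) := Real.Gamma_pos_of_pos hx2
  have hLpos : 0 < Real.Gamma x * x / Real.sqrt (x + 1/2) := by positivity
  rw [← Real.exp_log hGpos, ← Real.exp_log hLpos, Real.exp_le_exp,
    Real.log_div (by positivity) (Real.sqrt_pos.2 hx2).ne',
    Real.log_mul (Real.Gamma_pos_of_pos hx).ne' hx.ne', Real.log_sqrt hx2.le]
  linarith

lemma c_eq (n : ℕ) (hn : n ≠ 0) :
    (unitBallRadius (n+1) / unitBallRadius n) ^ n
      = Real.Gamma (((n:ℝ))/2+1 + 1/2) / (Real.sqrt π * Real.Gamma ((n:ℝ)/2+1)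
          * unitBallRadius (n+1)) := by
  have hR1 := unitBallRadius_pos (n+1)
  have hRn := unitBallRadius_pos n
  have hsp : (0:ℝ) < Real.sqrt π := Real.sqrt_pos.2 Real.pi_pos
  have hGn := gamma_half_pos n
  have hG1 := gamma_half_pos (n+1)
  have h1 : unitBallRadius (n+1) ^ (n+1) = Real.Gamma (((n+1:ℕ):ℝ)/2+1) / Real.sqrt π ^ (n+1) :=
    unitBallRadius_pow (n+1) (by omega)
  have h2 : unitBallRadius n ^ n = Real.Gamma ((n:ℝ)/2+1) / Real.sqrt π ^ n :=
    unitBallRadius_pow n hn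
  have harg : ((n+1:ℕ):ℝ)/2+1 = (n:ℝ)/2+1 + 1/2 := by push_cast; ring
  rw [harg] at h1
  have key : (unitBallRadius (n+1) / unitBallRadius n) ^ n
      = unitBallRadius (n+1) ^ (n+1) / (unitBallRadius n ^ n * unitBallRadius (n+1)) := by
    rw [div_pow, pow_succ]
    field_simp
  rw [key, h1, h2, pow_succ]
  have hGa : 0 < Real.Gamma ((n:ℝ)/2+1 + 1/2) := Real.Gamma_pos_of_pos (by positivity)
  field_simp

lemma aux_half_ratio : Tendsto (fun n : ℕ => ((n:ℝ)/2+1)/((n:ℝ)+1)) atTop (𝓝 (1/2)) := by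
  have h0 : Tendsto (fun n : ℕ => 1 / ((n:ℝ) + 1)) atTop (𝓝 0) :=
    tendsto_one_div_add_atTop_nhds_zero_nat
  have := (tendsto_const_nhds (x := (1/2:ℝ))).add (h0.const_mul (1/2:ℝ))
  rw [mul_zero, add_zero] at this
  refine this.congr fun n => ?_
  have hn0 : (0:ℝ) < (n:ℝ)+1 := by positivity
  field_simp
  ring

lemma aux_np1_div : Tendsto (fun n : ℕ => ((n:ℝ)+1) / unitBallRadius (n+1) ^ 2) atTop
    (𝓝 (2 * π * Real.exp 1)) := by
  have := tendsto_m_div_radius_sq.comp (tendsto_add_atTop_nat 1)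
  refine this.congr fun n => ?_
  simp [Function.comp]

lemma beta_tendsto : Tendsto (fun n : ℕ =>
    Real.sqrt ((n:ℝ)/2+1) / (Real.sqrt π * unitBallRadius (n+1))) atTop
    (𝓝 (Real.sqrt (Real.exp 1))) := by
  have hinner : Tendsto (fun n : ℕ => ((n:ℝ)/2+1) / (π * unitBallRadius (n+1)^2)) atTop
      (𝓝 (Real.exp 1)) := by
    have h := (aux_half_ratio.mul aux_np1_div).div_const π
    have heq : (1/2 : ℝ) * (2 * π * Real.exp 1) / π = Real.exp 1 := by
      field_simp
    rw [heq] at h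
    refine h.congr fun n => ?_
    have hR := unitBallRadius_pos (n+1)
    have hn0 : (0:ℝ) < (n:ℝ)+1 := by positivity
    field_simp
  have := (Real.continuous_sqrt.tendsto _).comp hinner
  refine this.congr fun n => ?_
  simp only [Function.comp]
  rw [Real.sqrt_div (by positivity), Real.sqrt_mul Real.pi_pos.le,
    Real.sqrt_sq (unitBallRadius_pos (n+1)).le]

lemma ratio3_tendsto : Tendsto (fun n : ℕ => Real.sqrt (((n:ℝ)/2+1)/((n:ℝ)/2+1+1/2)))
    atTop (𝓝 1) := by
  have hinner : Tendsto (fun n : ℕ => ((n:ℝ)/2+1)/((n:ℝ)/2+1+1/2)) atTop (𝓝 1) := by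
    have h0 : Tendsto (fun n : ℕ => 1 / ((n:ℝ) + 3)) atTop (𝓝 0) := by
      have : Tendsto (fun n : ℕ => (n:ℝ) + 3) atTop atTop :=
        tendsto_atTop_add_const_right _ 3 (tendsto_natCast_atTop_atTop (R := ℝ))
      simp only [one_div]
      exact this.inv_tendsto_atTop
    have := (tendsto_const_nhds (x := (1:ℝ))).sub h0
    rw [sub_zero] at this
    refine this.congr fun n => ?_
    have h3 : (0:ℝ) < (n:ℝ)+3 := by positivity
    field_simp
    ring
  have := (Real.continuous_sqrt.tendsto _).comp hinner
  simpa [Function.comp_def] using this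

lemma alpha_tendsto : Tendsto (fun n : ℕ =>
    ((n:ℝ)/2+1) / (Real.sqrt ((n:ℝ)/2+1+1/2) * Real.sqrt π * unitBallRadius (n+1))) atTop
    (𝓝 (Real.sqrt (Real.exp 1))) := by
  have := beta_tendsto.mul ratio3_tendsto
  rw [mul_one] at this
  refine this.congr fun n => ?_
  have hx : (0:ℝ) < (n:ℝ)/2+1 := by positivity
  have hx2 : (0:ℝ) < (n:ℝ)/2+1+1/2 := by positivity
  have hR := unitBallRadius_pos (n+1)
  have hsp : (0:ℝ) < Real.sqrt π := Real.sqrt_pos.2 Real.pi_pos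
  have hss : Real.sqrt ((n:ℝ)/2+1) * Real.sqrt ((n:ℝ)/2+1) = (n:ℝ)/2+1 :=
    Real.mul_self_sqrt hx.le
  rw [Real.sqrt_div hx.le, div_mul_div_comm, div_eq_div_iff (by positivity) (by positivity)]
  linear_combination (Real.sqrt ((n:ℝ)/2+1+1/2) * Real.sqrt π * unitBallRadius (n+1)) * hss
lemma tendsto_c : Tendsto (fun n : ℕ => (unitBallRadius (n+1) / unitBallRadius n) ^ n)
    atTop (𝓝 (Real.sqrt (Real.exp 1))) := by
  refine tendsto_of_tendsto_of_tendsto_of_le_of_le' alpha_tendsto beta_tendsto ?_ ?_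
  · filter_upwards [eventually_ge_atTop 1] with n hn
    have hx : (0:ℝ) < (n:ℝ)/2+1 := by positivity
    have hR := unitBallRadius_pos (n+1)
    have hsp : (0:ℝ) < Real.sqrt π := Real.sqrt_pos.2 Real.pi_pos
    have hGn := gamma_half_pos n
    rw [c_eq n (by omega)]
    have hlb := le_Gamma_add_half ((n:ℝ)/2+1) hx
    calc ((n:ℝ)/2+1) / (Real.sqrt ((n:ℝ)/2+1+1/2) * Real.sqrt π * unitBallRadius (n+1))
        = (Real.Gamma ((n:ℝ)/2+1) * ((n:ℝ)/2+1) / Real.sqrt ((n:ℝ)/2+1+1/2))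
            / (Real.sqrt π * Real.Gamma ((n:ℝ)/2+1) * unitBallRadius (n+1)) := by
          have hs2 : (0:ℝ) < Real.sqrt ((n:ℝ)/2+1+1/2) := Real.sqrt_pos.2 (by positivity)
          field_simp
      _ ≤ Real.Gamma ((n:ℝ)/2+1 + 1/2)
            / (Real.sqrt π * Real.Gamma ((n:ℝ)/2+1) * unitBallRadius (n+1)) := by
          gcongr
  · filter_upwards [eventually_ge_atTop 1] with n hn
    have hx : (0:ℝ) < (n:ℝ)/2+1 := by positivity
    have hR := unitBallRadius_pos (n+1)
    have hsp : (0:ℝ) < Real.sqrt π := Real.sqrt_pos.2 Real.pi_pos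
    have hGn := gamma_half_pos n
    rw [c_eq n (by omega)]
    have hub := Gamma_add_half_le ((n:ℝ)/2+1) hx
    calc Real.Gamma ((n:ℝ)/2+1 + 1/2)
          / (Real.sqrt π * Real.Gamma ((n:ℝ)/2+1) * unitBallRadius (n+1))
        ≤ (Real.Gamma ((n:ℝ)/2+1) * Real.sqrt ((n:ℝ)/2+1))
            / (Real.sqrt π * Real.Gamma ((n:ℝ)/2+1) * unitBallRadius (n+1)) := by
          gcongr
      _ = Real.sqrt ((n:ℝ)/2+1) / (Real.sqrt π * unitBallRadius (n+1)) := by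
          field_simp

lemma eventually_lt_radius (C : ℝ) : ∀ᶠ n : ℕ in atTop, C < unitBallRadius (n+1) := by
  have h := tendsto_radius_sq_atTop.comp (tendsto_add_atTop_nat 1)
  filter_upwards [h.eventually_gt_atTop (C^2)] with n hn
  have hR := unitBallRadius_pos (n+1)
  calc C ≤ |C| := le_abs_self C
    _ = Real.sqrt (C^2) := (Real.sqrt_sq_eq_abs C).symm
    _ < Real.sqrt (unitBallRadius (n+1)^2) := Real.sqrt_lt_sqrt (sq_nonneg C) hn
    _ = unitBallRadius (n+1) := Real.sqrt_sq hR.le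

lemma pointwise_limit (t : ℝ) (ht : 0 < t) :
    Tendsto (fun n : ℕ => (Real.sqrt (unitBallRadius (n+1)^2 - t^2) / unitBallRadius n)^n)
      atTop (𝓝 (Real.sqrt (Real.exp 1) * Real.exp (-(π * Real.exp 1) * t^2))) := by
  set s : ℕ → ℝ := fun n => t^2 / unitBallRadius (n+1)^2 with hs_def
  have hs_pos : ∀ n, 0 < s n := fun n => by
    have := unitBallRadius_pos (n+1); positivity
  have hs0 : Tendsto s atTop (𝓝 0) := by
    have hinv := (tendsto_radius_sq_atTop.comp (tendsto_add_atTop_nat 1)).inv_tendsto_atTop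
    have := hinv.const_mul (t^2)
    rw [mul_zero] at this
    refine this.congr fun n => ?_
    simp [hs_def, div_eq_mul_inv, Function.comp]
  have hslope : Tendsto (fun u : ℝ => Real.log (1 - u) / u) (𝓝[≠] 0) (𝓝 (-1)) := by
    have h1 : HasDerivAt (fun u : ℝ => 1 - u) (-1) 0 := by
      simpa using (hasDerivAt_id (0:ℝ)).const_sub 1
    have hd : HasDerivAt (fun u : ℝ => Real.log (1 - u)) (-1) 0 := by
      have := h1.log (by norm_num : (1:ℝ) - 0 ≠ 0)
      simpa using this
    rw [hasDerivAt_iff_tendsto_slope] at hd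
    refine hd.congr' ?_
    filter_upwards [self_mem_nhdsWithin] with u hu
    have : u ≠ 0 := hu
    simp [slope_def_field, this]
  have hq : Tendsto (fun n : ℕ => Real.log (1 - s n) / s n) atTop (𝓝 (-1)) := by
    refine hslope.comp (tendsto_nhdsWithin_iff.2 ⟨hs0, ?_⟩)
    exact Eventually.of_forall fun n => (hs_pos n).ne'
  have hratio : Tendsto (fun n : ℕ => (n:ℝ)/((n:ℝ)+1)) atTop (𝓝 1) := by
    have h0 : Tendsto (fun n : ℕ => 1 / ((n:ℝ) + 1)) atTop (𝓝 0) :=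
      tendsto_one_div_add_atTop_nhds_zero_nat
    have := (tendsto_const_nhds (x := (1:ℝ))).sub h0
    rw [sub_zero] at this
    refine this.congr fun n => ?_
    have : (0:ℝ) < (n:ℝ)+1 := by positivity
    field_simp
    ring
  have hcoef : Tendsto (fun n : ℕ => (n:ℝ)/2 * s n) atTop (𝓝 (π * Real.exp 1 * t^2)) := by
    have h := (hratio.mul aux_np1_div).const_mul (t^2/2)
    have heq : t^2/2 * (1 * (2 * π * Real.exp 1)) = π * Real.exp 1 * t^2 := by ring
    rw [heq] at h
    refine h.congr fun n => ?_
    have hR := unitBallRadius_pos (n+1)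
    have hn1 : (0:ℝ) < (n:ℝ)+1 := by positivity
    simp only [hs_def]
    field_simp
  have hexp_arg : Tendsto (fun n : ℕ => (n:ℝ)/2 * Real.log (1 - s n)) atTop
      (𝓝 (-(π * Real.exp 1 * t^2))) := by
    have h := hcoef.mul hq
    rw [mul_neg_one] at h
    refine h.congr fun n => ?_
    field_simp [(hs_pos n).ne']
  have hh : Tendsto (fun n : ℕ => Real.exp ((n:ℝ)/2 * Real.log (1 - s n))) atTop
      (𝓝 (Real.exp (-(π * Real.exp 1 * t^2)))) :=
    (Real.continuous_exp.tendsto _).comp hexp_arg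
  have hfinal := tendsto_c.mul hh
  have hlim_eq : Real.sqrt (Real.exp 1) * Real.exp (-(π * Real.exp 1 * t^2))
      = Real.sqrt (Real.exp 1) * Real.exp (-(π * Real.exp 1) * t^2) := by ring_nf
  rw [hlim_eq] at hfinal
  refine hfinal.congr' ?_
  filter_upwards [eventually_lt_radius t] with n hn
  have hR := unitBallRadius_pos (n+1)
  have hRn := unitBallRadius_pos n
  set R := unitBallRadius (n+1)
  have ha : 0 < R^2 - t^2 := by nlinarith
  have hb : (0:ℝ) < (R^2 - t^2) / R^2 := by positivity
  have h1 : 1 - s n = (R^2 - t^2) / R^2 := by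
    simp only [hs_def]
    show 1 - t^2/R^2 = _
    field_simp
  have h2 : Real.exp ((n:ℝ)/2 * Real.log (1 - s n)) = Real.sqrt ((R^2 - t^2)/R^2) ^ n := by
    rw [h1]
    have harg : (n:ℝ)/2 * Real.log ((R^2 - t^2)/R^2)
        = (n:ℝ) * Real.log (Real.sqrt ((R^2 - t^2)/R^2)) := by
      rw [Real.log_sqrt hb.le]; ring
    rw [harg, Real.exp_nat_mul, Real.exp_log (Real.sqrt_pos.2 hb)]
  have h3 : Real.sqrt ((R^2 - t^2)/R^2) = Real.sqrt (R^2 - t^2) / R := by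
    rw [Real.sqrt_div ha.le, Real.sqrt_sq hR.le]
  rw [h2, h3, ← mul_pow]
  congr 1
  field_simp

lemma norm_le_iff_sum_sq {m : ℕ} (x : EuclideanSpace ℝ (Fin m)) {r : ℝ} (hr : 0 ≤ r) :
    ‖x‖ ≤ r ↔ ∑ i, x i ^ 2 ≤ r ^ 2 := by
  rw [EuclideanSpace.norm_eq]
  simp only [Real.norm_eq_abs, sq_abs]
  have hnn : 0 ≤ ∑ i, x i ^ 2 := Finset.sum_nonneg fun i _ => sq_nonneg _
  constructor
  · intro h
    have := Real.sq_sqrt hnn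
    nlinarith [Real.sqrt_nonneg (∑ i, x i ^ 2)]
  · intro h
    have h2 : Real.sqrt (∑ i, x i ^ 2) ≤ Real.sqrt (r^2) := Real.sqrt_le_sqrt h
    rwa [Real.sqrt_sq hr] at h2

lemma volume_slab (d : ℝ) (hd : 0 ≤ d) (n : ℕ) (hn : n ≠ 0)
    (hR : d < unitBallRadius (n+1)) :
    (volume {x : EuclideanSpace ℝ (Fin (n + 1)) |
        ‖x‖ ≤ unitBallRadius (n + 1) ∧ 0 ≤ x 0 ∧ x 0 ≤ d}).toReal
      = ∫ t in (0:ℝ)..d,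
          (Real.sqrt (unitBallRadius (n+1)^2 - t^2) / unitBallRadius n)^n := by
  haveI : Nonempty (Fin n) := Fin.pos_iff_nonempty.1 (Nat.pos_of_ne_zero hn)
  set R := unitBallRadius (n+1) with hRdef
  have hR0 : 0 < R := unitBallRadius_pos (n+1)
  set B : Set (ℝ × (Fin n → ℝ)) :=
    {p | p.1^2 + ∑ i, (p.2 i)^2 ≤ R^2 ∧ 0 ≤ p.1 ∧ p.1 ≤ d} with hBdef
  have hcont : Continuous fun p : ℝ × (Fin n → ℝ) => p.1^2 + ∑ i, (p.2 i)^2 :=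
    ((continuous_fst.pow 2).add
      (continuous_finset_sum _ fun i _ => ((continuous_apply i).comp continuous_snd).pow 2))
  have hBmeas : MeasurableSet B := by
    have : B = (fun p : ℝ × (Fin n → ℝ) => p.1^2 + ∑ i, (p.2 i)^2) ⁻¹' (Set.Iic (R^2))
        ∩ (Prod.fst ⁻¹' (Set.Icc 0 d)) := by
      ext p
      simp only [hBdef, Set.mem_setOf_eq, Set.mem_inter_iff, Set.mem_preimage, Set.mem_Iic,
        Set.mem_Icc]
    rw [this]
    exact (hcont.measurable measurableSet_Iic).inter (measurable_fst measurableSet_Icc)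
  set ψ := MeasurableEquiv.piFinSuccAbove (fun _ : Fin (n+1) => ℝ) 0 with hψdef
  have hψapp : ∀ y : Fin (n+1) → ℝ, ψ y = (y 0, fun j => y j.succ) := fun y => by
    simp only [hψdef, MeasurableEquiv.piFinSuccAbove_apply]
    rfl
  have hS : {x : EuclideanSpace ℝ (Fin (n + 1)) | ‖x‖ ≤ R ∧ 0 ≤ x 0 ∧ x 0 ≤ d}
      = ⇑(MeasurableEquiv.toLp 2 (Fin (n+1) → ℝ)).symm ⁻¹' (⇑ψ ⁻¹' B) := by
    ext x
    rw [Set.mem_setOf_eq, Set.mem_preimage, Set.mem_preimage, hψapp]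
    rw [norm_le_iff_sum_sq x hR0.le, Fin.sum_univ_succ (f := fun i => x i ^ 2)]
    exact Iff.rfl
  have hv1 : volume {x : EuclideanSpace ℝ (Fin (n + 1)) | ‖x‖ ≤ R ∧ 0 ≤ x 0 ∧ x 0 ≤ d}
      = volume (⇑ψ ⁻¹' B) := by
    rw [hS]
    exact (EuclideanSpace.volume_preserving_symm_measurableEquiv_toLp (Fin (n+1))).measure_preimage
      ((ψ.measurable hBmeas).nullMeasurableSet)
  have hv2 : volume (⇑ψ ⁻¹' B) = volume B :=
    (volume_preserving_piFinSuccAbove (fun _ : Fin (n+1) => ℝ) 0).measure_preimage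
      hBmeas.nullMeasurableSet
  have hv3 : volume B = ∫⁻ t : ℝ, volume (Prod.mk t ⁻¹' B) := by
    rw [MeasureTheory.Measure.volume_eq_prod, Measure.prod_apply hBmeas]
  have hslice : ∀ t : ℝ, volume (Prod.mk t ⁻¹' B)
      = Set.indicator (Set.Icc 0 d)
          (fun t => ENNReal.ofReal ((Real.sqrt (R^2 - t^2) / unitBallRadius n)^n)) t := by
    intro t
    by_cases ht : t ∈ Set.Icc 0 d
    · rw [Set.indicator_of_mem ht]
      obtain ⟨ht0, htd⟩ := ht
      have htR : t < R := lt_of_le_of_lt htd hR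
      have ha : 0 < R^2 - t^2 := by nlinarith
      have hset : Prod.mk t ⁻¹' B = {z : Fin n → ℝ | ∑ i, z i ^ 2 ≤ R^2 - t^2} := by
        ext z
        simp only [hBdef, Set.mem_preimage, Set.mem_setOf_eq]
        constructor
        · rintro ⟨h1, _, _⟩; linarith
        · intro h; exact ⟨by linarith, ht0, htd⟩
      have hmeas2 : MeasurableSet {z : Fin n → ℝ | ∑ i, z i ^ 2 ≤ R^2 - t^2} := by
        have hc : Continuous fun z : Fin n → ℝ => ∑ i, z i ^ 2 :=
          continuous_finset_sum _ fun i _ => (continuous_apply i).pow 2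
        exact hc.measurable measurableSet_Iic
      have hpre := (EuclideanSpace.volume_preserving_symm_measurableEquiv_toLp (Fin n)).measure_preimage
        hmeas2.nullMeasurableSet
      have hball : ⇑(MeasurableEquiv.toLp 2 (Fin n → ℝ)).symm ⁻¹'
            {z : Fin n → ℝ | ∑ i, z i ^ 2 ≤ R^2 - t^2}
          = Metric.closedBall (0 : EuclideanSpace ℝ (Fin n)) (Real.sqrt (R^2 - t^2)) := by
        ext x
        rw [Set.mem_preimage, Metric.mem_closedBall, dist_zero_right,
          norm_le_iff_sum_sq x (Real.sqrt_nonneg _), Real.sq_sqrt ha.le]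
        exact Iff.rfl
      rw [hset, ← hpre, hball, EuclideanSpace.volume_closedBall]
      rw [← ENNReal.ofReal_pow (Real.sqrt_nonneg _), ← ENNReal.ofReal_mul (by positivity)]
      congr 1
      have hGn := gamma_half_pos n
      have hsp : (0:ℝ) < Real.sqrt π := Real.sqrt_pos.2 Real.pi_pos
      rw [div_pow, unitBallRadius_pow n hn, Fintype.card_fin]
      rw [div_div_eq_mul_div, mul_div_assoc]
    · rw [Set.indicator_of_notMem ht]
      have : Prod.mk t ⁻¹' B = ∅ := by
        ext z
        simp only [hBdef, Set.mem_preimage, Set.mem_setOf_eq, Set.mem_empty_iff_false,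
          iff_false, not_and]
        intro _ h2 h3
        exact ht ⟨h2, h3⟩
      rw [this, measure_empty]
  have hv4 : volume B = ∫⁻ t in Set.Icc (0:ℝ) d,
      ENNReal.ofReal ((Real.sqrt (R^2 - t^2) / unitBallRadius n)^n) := by
    rw [hv3]
    rw [← MeasureTheory.lintegral_indicator measurableSet_Icc]
    exact lintegral_congr hslice
  have hFcont : Continuous fun t : ℝ => (Real.sqrt (R^2 - t^2) / unitBallRadius n)^n :=
    (((Real.continuous_sqrt.comp (continuous_const.sub (continuous_pow 2))).div_const
      _).pow n)
  have hv5 : ∫ t in Set.Icc (0:ℝ) d, (Real.sqrt (R^2 - t^2) / unitBallRadius n)^n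
      = (∫⁻ t in Set.Icc (0:ℝ) d,
          ENNReal.ofReal ((Real.sqrt (R^2 - t^2) / unitBallRadius n)^n)).toReal := by
    refine integral_eq_lintegral_of_nonneg_ae ?_ ?_
    · refine Filter.Eventually.of_forall fun t => ?_
      have := unitBallRadius_pos n
      positivity
    · exact hFcont.aestronglyMeasurable.restrict
  rw [hv1, hv2, hv4, ← hv5, MeasureTheory.integral_Icc_eq_integral_Ioc,
    ← intervalIntegral.integral_of_le hd]

end AuxLemmas

section AuxLemmas2
open Topology

/-- The volume of the slab `{x ∈ Sₙ : 0 ≤ x₁ ≤ d}` of the unit-volume ball `Sₙ ⊂ ℝⁿ`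
tends to `√e ∫₀^d exp (-π e x²) dx` as `n → ∞`. -/
theorem tendsto_slab_volume (d : ℝ) (hd : 0 < d) :
    Tendsto
      (fun n : ℕ =>
        (volume {x : EuclideanSpace ℝ (Fin (n + 1)) |
          ‖x‖ ≤ unitBallRadius (n + 1) ∧ 0 ≤ x 0 ∧ x 0 ≤ d}).toReal)
      atTop
      (nhds (Real.sqrt (Real.exp 1) *
        ∫ x in (0 : ℝ)..d, Real.exp (-(π * Real.exp 1) * x ^ 2))) := by

  set F : ℕ → ℝ → ℝ :=
    fun n t => (Real.sqrt (unitBallRadius (n+1)^2 - t^2) / unitBallRadius n)^n with hFdef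
  have hsqrt2 : Real.sqrt (Real.exp 1) < 2 := by
    have h4 : Real.exp 1 < 4 := by
      have := Real.exp_one_lt_d9
      linarith
    calc Real.sqrt (Real.exp 1) < Real.sqrt 4 :=
          Real.sqrt_lt_sqrt (Real.exp_pos 1).le h4
      _ = 2 := by
        rw [show (4:ℝ) = 2^2 by norm_num, Real.sqrt_sq (by norm_num : (0:ℝ) ≤ 2)]
  have hdc : Tendsto (fun n : ℕ => ∫ t in Set.Ioc (0:ℝ) d, F n t) atTop
      (𝓝 (∫ t in Set.Ioc (0:ℝ) d,
        Real.sqrt (Real.exp 1) * Real.exp (-(π * Real.exp 1) * t^2))) := by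
    refine tendsto_integral_filter_of_dominated_convergence (fun _ => (2:ℝ)) ?_ ?_ ?_ ?_
    · refine Filter.Eventually.of_forall fun n => ?_
      have hFcont : Continuous (F n) :=
        ((Real.continuous_sqrt.comp (continuous_const.sub (continuous_pow 2))).div_const
          _).pow n
      exact hFcont.aestronglyMeasurable.restrict
    · filter_upwards [tendsto_c.eventually_le_const hsqrt2] with n hc
      refine Filter.Eventually.of_forall fun t => ?_
      have hRn := unitBallRadius_pos n
      have hR1 := unitBallRadius_pos (n+1)
      have h1 : Real.sqrt (unitBallRadius (n+1)^2 - t^2) ≤ unitBallRadius (n+1) := by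
        calc Real.sqrt (unitBallRadius (n+1)^2 - t^2) ≤ Real.sqrt (unitBallRadius (n+1)^2) :=
              Real.sqrt_le_sqrt (by nlinarith [sq_nonneg t])
          _ = unitBallRadius (n+1) := Real.sqrt_sq hR1.le
      have h2 : F n t ≤ (unitBallRadius (n+1) / unitBallRadius n)^n := by
        simp only [hFdef]
        gcongr
      have h3 : 0 ≤ F n t := by
        simp only [hFdef]
        positivity
      rw [Real.norm_eq_abs, abs_of_nonneg h3]
      exact h2.trans hc
    · exact (MeasureTheory.integrableOn_const measure_Ioc_lt_top.ne)
    · rw [MeasureTheory.ae_restrict_iff' measurableSet_Ioc]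
      exact Filter.Eventually.of_forall fun t ht => pointwise_limit t ht.1
  have htarget : Real.sqrt (Real.exp 1) * ∫ x in (0:ℝ)..d, Real.exp (-(π * Real.exp 1) * x^2)
      = ∫ t in Set.Ioc (0:ℝ) d,
          Real.sqrt (Real.exp 1) * Real.exp (-(π * Real.exp 1) * t^2) := by
    rw [← intervalIntegral.integral_const_mul, intervalIntegral.integral_of_le hd.le]
  rw [htarget]
  refine hdc.congr' ?_
  filter_upwards [eventually_ge_atTop 1, eventually_lt_radius d] with n hn hRd
  rw [← intervalIntegral.integral_of_le hd.le,
    ← volume_slab d hd.le n (by omega) hRd]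

end AuxLemmas2
end

section
/- For every n there exists a convex body K_n ⊂ ℝ^n of unit volume (a box with sides 1/2, …, 1/2, 2^{n-1}) and subsets A_n, B_n ⊆ K_n each of volume 1/4 with dist(A_n, B_n) ≥ 2^{n-2}; hence the uniform bounded-distance conclusion fails without symmetry assumptions on the body. -/
open MeasureTheory

/-- The infimum of distances between points of `A` and points of `B`. -/
noncomputable def setDist {n : ℕ} (A B : Set (EuclideanSpace ℝ (Fin n))) : ℝ :=
  sInf {d | ∃ x ∈ A, ∃ y ∈ B, d = dist x y}

/-- For every `n ≥ 1` there is a convex body `Kₙ ⊂ ℝⁿ` of unit volume (an elongated box)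
containing subsets `Aₙ, Bₙ` each of volume `1/4` with `dist (Aₙ, Bₙ) ≥ 2^(n-2)`; so the
uniform bounded-distance conclusion fails without symmetry assumptions on the body. -/
theorem exists_elongated_box_counterexample (n : ℕ) (hn : 1 ≤ n) :
    ∃ K A B : Set (EuclideanSpace ℝ (Fin n)),
      Convex ℝ K ∧ IsCompact K ∧ volume K = 1 ∧
      A ⊆ K ∧ B ⊆ K ∧
      volume A = ENNReal.ofReal (1 / 4) ∧ volume B = ENNReal.ofReal (1 / 4) ∧
      (2 : ℝ) ^ ((n : ℤ) - 2) ≤ setDist A B := by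
  obtain ⟨m, rfl⟩ : ∃ m, n = m + 1 := ⟨n - 1, (Nat.succ_pred_eq_of_pos hn).symm⟩
  set L : Fin (m + 1) := Fin.last m with hL
  -- interval bounds for the three boxes
  set lo : Fin (m + 1) → ℝ := fun _ => 0 with hlo
  set hiK : Fin (m + 1) → ℝ := fun i => if i = L then 2 ^ m else 1 / 2 with hhiK
  set hiA : Fin (m + 1) → ℝ := fun i => if i = L then 2 ^ m / 4 else 1 / 2 with hhiA
  set loB : Fin (m + 1) → ℝ := fun i => if i = L then 3 * 2 ^ m / 4 else 0 with hloB
  set K : Set (EuclideanSpace ℝ (Fin (m + 1))) :=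
    {x | ∀ i, x i ∈ Set.Icc (lo i) (hiK i)} with hK
  set A : Set (EuclideanSpace ℝ (Fin (m + 1))) :=
    {x | ∀ i, x i ∈ Set.Icc (lo i) (hiA i)} with hA
  set B : Set (EuclideanSpace ℝ (Fin (m + 1))) :=
    {x | ∀ i, x i ∈ Set.Icc (loB i) (hiK i)} with hB
  have hcastSucc : ∀ i : Fin m, (Fin.castSucc i : Fin (m + 1)) ≠ L :=
    fun i => (Fin.castSucc_lt_last i).ne
  -- volume computation via the measurable equiv
  have hvol : ∀ (a b : Fin (m + 1) → ℝ),
      volume ({x : EuclideanSpace ℝ (Fin (m + 1)) | ∀ i, x i ∈ Set.Icc (a i) (b i)}) =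
        ∏ i, ENNReal.ofReal (b i - a i) := by
    intro a b
    have h1 : ({x : EuclideanSpace ℝ (Fin (m + 1)) | ∀ i, x i ∈ Set.Icc (a i) (b i)}) =
        ((MeasurableEquiv.toLp 2 (Fin (m + 1) → ℝ)).symm) ⁻¹'
          (Set.univ.pi fun i => Set.Icc (a i) (b i)) := by
      ext x
      simp only [Set.mem_setOf_eq, Set.mem_preimage, Set.mem_pi, Set.mem_univ, true_implies]
      rfl
    rw [h1, (EuclideanSpace.volume_preserving_symm_measurableEquiv_toLp (Fin (m + 1))).measure_preimage
        ((MeasurableSet.univ_pi fun i => measurableSet_Icc).nullMeasurableSet),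
      volume_pi_pi]
    simp [Real.volume_Icc]
  have prodK : (∏ i, ENNReal.ofReal (hiK i - lo i)) = 1 := by
    rw [Fin.prod_univ_castSucc]
    simp only [hhiK, hlo, hcastSucc, if_false, if_pos rfl, sub_zero, Finset.prod_const,
      Finset.card_univ, Fintype.card_fin]
    rw [if_pos hL.symm]
    rw [← ENNReal.ofReal_pow (by norm_num), ← ENNReal.ofReal_mul (by positivity)]
    rw [show ((1:ℝ)/2) ^ m * 2 ^ m = ((1/2 : ℝ) * 2) ^ m by rw [mul_pow]]
    norm_num
  have prodA : (∏ i, ENNReal.ofReal (hiA i - lo i)) = ENNReal.ofReal (1 / 4) := by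
    rw [Fin.prod_univ_castSucc]
    simp only [hhiA, hlo, hcastSucc, if_false, if_pos rfl, sub_zero, Finset.prod_const,
      Finset.card_univ, Fintype.card_fin]
    rw [if_pos hL.symm]
    rw [← ENNReal.ofReal_pow (by norm_num), ← ENNReal.ofReal_mul (by positivity)]
    congr 1
    rw [show ((1:ℝ)/2) ^ m * (2 ^ m / 4) = ((1/2 : ℝ) * 2) ^ m / 4 by rw [mul_pow]; ring]
    norm_num
  have prodB : (∏ i, ENNReal.ofReal (hiK i - loB i)) = ENNReal.ofReal (1 / 4) := by
    rw [Fin.prod_univ_castSucc]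
    simp only [hhiK, hloB, hcastSucc, if_false, if_pos rfl, sub_zero, Finset.prod_const,
      Finset.card_univ, Fintype.card_fin]
    rw [if_pos hL.symm, if_pos hL.symm]
    rw [← ENNReal.ofReal_pow (by norm_num), ← ENNReal.ofReal_mul (by positivity)]
    congr 1
    rw [show (2:ℝ) ^ m - 3 * 2 ^ m / 4 = 2 ^ m / 4 by ring,
      show ((1:ℝ)/2) ^ m * (2 ^ m / 4) = ((1/2 : ℝ) * 2) ^ m / 4 by rw [mul_pow]; ring]
    norm_num
  refine ⟨K, A, B, ?_, ?_, ?_, ?_, ?_, ?_, ?_, ?_⟩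
  · -- convexity
    intro x hx y hy a b ha hb hab i
    have : (a • x + b • y) i = a * x i + b * y i := rfl
    rw [this]
    exact (convex_Icc _ _) (hx i) (hy i) ha hb hab
  · -- compactness
    have h1 : K = (PiLp.continuousLinearEquiv 2 ℝ (fun _ : Fin (m+1) => ℝ)).toHomeomorph ⁻¹'
        (Set.univ.pi fun i => Set.Icc (lo i) (hiK i)) := by
      ext x
      simp only [Set.mem_setOf_eq, Set.mem_preimage, Set.mem_pi, Set.mem_univ, true_implies,
        Set.mem_Icc]
      constructor <;> exact fun h i => ⟨(h i).1, (h i).2⟩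
    rw [h1, Homeomorph.isCompact_preimage]
    exact isCompact_univ_pi fun i => isCompact_Icc
  · rw [hK, hvol, prodK]
  · -- A ⊆ K
    intro x hx i
    refine ⟨(hx i).1, le_trans (hx i).2 ?_⟩
    simp only [hhiA, hhiK]
    split_ifs
    · have : (0:ℝ) < 2 ^ m := by positivity
      linarith
    · exact le_rfl
  · -- B ⊆ K
    intro x hx i
    refine ⟨le_trans ?_ (hx i).1, (hx i).2⟩
    simp only [hloB, hlo]
    split_ifs
    · positivity
    · exact le_rfl
  · rw [hA, hvol, prodA]
  · rw [hB, hvol, prodB]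
  · -- distance bound
    have h2m : (0:ℝ) < 2 ^ m := by positivity
    have hgoal : (2 : ℝ) ^ (((m + 1 : ℕ) : ℤ) - 2) = 2 ^ m / 2 := by
      have h' : ((m + 1 : ℕ) : ℤ) - 2 = (m : ℤ) - 1 := by push_cast; ring
      rw [h', zpow_sub₀ (by norm_num : (2:ℝ) ≠ 0), zpow_natCast, zpow_one]
    rw [hgoal]
    -- nonempty witnesses
    have haA : (WithLp.toLp 2 (fun _ => 0) : EuclideanSpace ℝ (Fin (m+1))) ∈ A := by
      intro i
      simp only [hA, hlo, hhiA, Set.mem_Icc]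
      refine ⟨le_rfl, ?_⟩
      split_ifs <;> positivity
    have hbB : (WithLp.toLp 2 (fun i => if i = L then 3 * 2 ^ m / 4 else 0) :
        EuclideanSpace ℝ (Fin (m+1))) ∈ B := by
      intro i
      simp only [hB, hloB, hhiK, Set.mem_Icc]
      split_ifs
      · exact ⟨le_rfl, by linarith⟩
      · simp
    refine le_csInf ⟨_, ⟨_, haA, _, hbB, rfl⟩⟩ ?_
    rintro d ⟨x, hx, y, hy, rfl⟩
    have hxL := hx L
    have hyL := hy L
    simp only [hA, hB, hlo, hhiA, hloB, hhiK, if_pos rfl, Set.mem_Icc] at hxL hyL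
    have h1 : dist (x L) (y L) ≤ dist x y := by
      rw [EuclideanSpace.dist_eq]
      calc dist (x L) (y L) = Real.sqrt (dist (x L) (y L) ^ 2) :=
            (Real.sqrt_sq dist_nonneg).symm
        _ ≤ Real.sqrt (∑ i, dist (x i) (y i) ^ 2) :=
            Real.sqrt_le_sqrt (Finset.single_le_sum
              (f := fun i => dist (x i) (y i) ^ 2) (fun i _ => sq_nonneg _)
              (Finset.mem_univ L))
    have h2 : (2:ℝ) ^ m / 2 ≤ dist (x L) (y L) := by
      rw [Real.dist_eq, abs_sub_comm]
      calc (2:ℝ) ^ m / 2 ≤ y L - x L := by linarith [hxL.2, hyL.1]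
        _ ≤ |y L - x L| := le_abs_self _
    linarith
end
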